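/- arXiv:2310.01149 — 5 statements merged into one kernel-verified Lean document; each statement's English description precedes it below -/
import Mathlib

section
/- Let G be a finite simple graph and k a positive integer. Let s* be the maximum size of a k-matching in G and p* the maximum number of edges colored by any proper partial k-edge-coloring of G. Then p* ≤ s* ≤ ((k+1)/k)·p*. -/
open Finset
open scoped Classical

namespace VizingAux

variable {V : Type*} {C : Type*}

/-- Properness of a partial edge coloring on edge set `M`. -/
def Proper (M : Finset (Sym2 V)) (f : Sym2 V → Option C) : Prop :=
  ∀ e ∈ M, ∀ e' ∈ M, e ≠ e' → (∃ v, v ∈ e ∧ v ∈ e') → (f e).isSome → f e ≠ f e'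

/-- Color `c` does not appear at vertex `v`. -/
def Missed (M : Finset (Sym2 V)) (f : Sym2 V → Option C) (v : V) (c : C) : Prop :=
  ∀ e ∈ M, v ∈ e → f e ≠ some c

lemma exists_missed {k : ℕ} (M : Finset (Sym2 V)) (f : Sym2 V → Option (Fin (k+1)))
    (v : V) (hdeg : (M.filter (fun e => v ∈ e)).card ≤ k) :
    ∃ c : Fin (k+1), Missed M f v c := by
  by_contra h
  push_neg at h
  simp only [Missed, not_forall] at h
  have hsub : (univ : Finset (Fin (k+1))).image some ⊆ (M.filter (fun e => v ∈ e)).image f := by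
    intro o ho
    simp only [mem_image, mem_univ, true_and] at ho
    obtain ⟨c, rfl⟩ := ho
    obtain ⟨e, heM, hve, hfe⟩ := h c
    simp only [not_not] at hfe
    exact mem_image.2 ⟨e, mem_filter.2 ⟨heM, hve⟩, hfe⟩
  have h1 : (k+1) ≤ ((M.filter (fun e => v ∈ e)).image f).card := by
    have := Finset.card_le_card hsub
    rwa [Finset.card_image_of_injective _ (Option.some_injective _), card_univ,
      Fintype.card_fin] at this
  have h2 := Finset.card_image_le (s := M.filter (fun e => v ∈ e)) (f := f)
  omega

/-- In a graph where no vertex has three distinct neighbours, three distinct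
vertices of degree at most one cannot all be connected. -/
lemma three {H : SimpleGraph V}
    (hdeg2 : ∀ v w₁ w₂ w₃, H.Adj v w₁ → H.Adj v w₂ → H.Adj v w₃ → w₁ = w₂ ∨ w₁ = w₃ ∨ w₂ = w₃)
    {a b c : V}
    (ha : ∀ w₁ w₂, H.Adj a w₁ → H.Adj a w₂ → w₁ = w₂)
    (hb : ∀ w₁ w₂, H.Adj b w₁ → H.Adj b w₂ → w₁ = w₂)
    (hc : ∀ w₁ w₂, H.Adj c w₁ → H.Adj c w₂ → w₁ = w₂)
    (hab : a ≠ b) (hac : a ≠ c) (hbc : b ≠ c)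
    (h1 : H.Reachable a b) (h2 : H.Reachable a c) : False := by
  classical
  -- a path from b to c
  obtain ⟨w⟩ := h1.symm.trans h2
  set P : H.Walk b c := w.toPath.1 with hPdef
  have hP : P.IsPath := w.toPath.2
  -- helper: last-but-one vertex
  have penult : ∀ {u v : V} (W : H.Walk u v), ¬ W.Nil → ∃ z, H.Adj v z ∧ z ∈ W.support := by
    intro u v W
    induction W with
    | nil => intro h; exact absurd SimpleGraph.Walk.Nil.nil h
    | @cons u u' v h W ih =>
      intro _
      by_cases hW : W.Nil
      · have : u' = v := hW.eq  -- maybe wrong name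
        subst this
        exact ⟨u, h.symm, by simp⟩
      · obtain ⟨z, hz1, hz2⟩ := ih hW
        exact ⟨z, hz1, by simp [hz2]⟩
  have first : ∀ {u v : V} (W : H.Walk u v), ¬ W.Nil → ∃ z, H.Adj u z ∧ z ∈ W.support := by
    intro u v W
    induction W with
    | nil => intro h; exact absurd SimpleGraph.Walk.Nil.nil h
    | @cons u u' v h W _ =>
      intro _
      exact ⟨u', h, by simp [W.start_mem_support]⟩
  have disj : ∀ {v : V} (q : H.Walk b v) (r : H.Walk v c), P = q.append r →
      ∀ z, H.Adj v z → z ∈ q.support → z ∈ r.support → False := by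
    intro v q r hqr z hadj hzq hzr
    have hzv : z ≠ v := fun h => (h ▸ hadj).ne' rfl
    have hzr' : z ∈ r.support.tail := by
      have := r.support_eq_cons
      rw [this] at hzr
      rcases List.mem_cons.mp hzr with h | h
      · exact absurd h hzv
      · exact h
    have hnd := hP.support_nodup
    rw [hqr, SimpleGraph.Walk.support_append] at hnd
    exact (List.disjoint_of_nodup_append hnd) hzq hzr'
  have closure : ∀ v ∈ P.support, ∀ u, H.Adj v u → u ∈ P.support := by
    intro v hv u hu
    obtain ⟨q, r, hqr⟩ := SimpleGraph.Walk.mem_support_iff_exists_append.mp hv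
    by_cases hq : q.Nil
    · have hbv : b = v := hq.eq
      subst hbv
      by_cases hr : r.Nil
      · exact absurd hr.eq hbc
      · obtain ⟨z, hz1, hz2⟩ := first r hr
        have : u = z := hb u z hu hz1
        subst this
        rw [hqr, SimpleGraph.Walk.mem_support_append_iff]
        exact Or.inr hz2
    · by_cases hr : r.Nil
      · have hvc : v = c := hr.eq
        subst hvc
        obtain ⟨z, hz1, hz2⟩ := penult q hq
        have : u = z := hc u z hu hz1
        subst this
        rw [hqr, SimpleGraph.Walk.mem_support_append_iff]
        exact Or.inl hz2
      · obtain ⟨z1, hz11, hz12⟩ := penult q hq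
        obtain ⟨z2, hz21, hz22⟩ := first r hr
        have hz12' : z1 ≠ z2 := by
          intro h
          exact disj q r hqr z1 hz11 hz12 (h ▸ hz22)
        rcases hdeg2 v z1 z2 u hz11 hz21 hu with h | h | h
        · exact absurd h hz12'
        · rw [hqr, SimpleGraph.Walk.mem_support_append_iff]; exact Or.inl (h ▸ hz12)
        · rw [hqr, SimpleGraph.Walk.mem_support_append_iff]; exact Or.inr (h ▸ hz22)
  have reach : ∀ {s t : V} (W : H.Walk s t), s ∈ P.support → t ∈ P.support := by
    intro s t W
    induction W with
    | nil => exact id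
    | @cons s s' t h W ih => intro hs; exact ih (closure s hs s' h)
  have haP : a ∈ P.support := by
    obtain ⟨Q⟩ := h1.symm
    exact reach Q P.start_mem_support
  obtain ⟨q, r, hqr⟩ := SimpleGraph.Walk.mem_support_iff_exists_append.mp haP
  have hq : ¬ q.Nil := fun h => hab h.eq.symm
  have hr : ¬ r.Nil := fun h => hac h.eq
  obtain ⟨z1, hz11, hz12⟩ := penult q hq
  obtain ⟨z2, hz21, hz22⟩ := first r hr
  have : z1 = z2 := ha z1 z2 hz11 hz21
  exact disj q r hqr z1 hz11 hz12 (this ▸ hz22)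

section Swap

variable (M : Finset (Sym2 V)) (f : Sym2 V → Option C) (α β : C) (x₀ : V)

/-- The graph of edges coloured `α` or `β`. -/
def kempe : SimpleGraph V where
  Adj p q := p ≠ q ∧ s(p,q) ∈ M ∧ (f s(p,q) = some α ∨ f s(p,q) = some β)
  symm := by
    constructor; intro p q ⟨h1, h2, h3⟩
    refine ⟨h1.symm, ?_, ?_⟩ <;> rwa [Sym2.eq_swap]
  loopless := ⟨fun p h => h.1 rfl⟩

/-- Swap the colours `α` and `β` on the connected component of `x₀`. -/
noncomputable def swapCol : Sym2 V → Option C := fun e =>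
  if (f e = some α ∨ f e = some β) ∧ ∃ p ∈ e, (kempe M f α β).Reachable x₀ p
  then (if f e = some α then some β else some α) else f e

variable {M f α β x₀}
variable (hnd : ∀ e ∈ M, ¬ e.IsDiag) (hdom : ∀ e, (f e).isSome → e ∈ M)
  (hprop : Proper M f) (hab : α ≠ β)

include hnd hdom in
/-- If a swapped edge contains `v`, then `v` is reachable from `x₀`. -/
lemma reachable_of_cond {e : Sym2 V}
    (h1 : f e = some α ∨ f e = some β) (h2 : ∃ p ∈ e, (kempe M f α β).Reachable x₀ p)
    {v : V} (hv : v ∈ e) : (kempe M f α β).Reachable x₀ v := by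
  induction e with
  | _ p q =>
    have heM : s(p,q) ∈ M := hdom _ (by rcases h1 with h | h <;> simp [h])
    have hpq : p ≠ q := by simpa [Sym2.isDiag_iff_proj_eq] using hnd _ heM
    have hadj : (kempe M f α β).Adj p q := ⟨hpq, heM, h1⟩
    obtain ⟨z, hz, hreach⟩ := h2
    rcases Sym2.mem_iff.mp hz with rfl | rfl <;> rcases Sym2.mem_iff.mp hv with rfl | rfl
    · exact hreach
    · exact hreach.trans hadj.reachable
    · exact hreach.trans hadj.symm.reachable
    · exact hreach

lemma swapCol_isSome {e : Sym2 V} : (swapCol M f α β x₀ e).isSome = (f e).isSome := by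
  unfold swapCol
  split_ifs with h h'
  · simp [h']
  · rcases h.1 with h1 | h1 <;> simp [h1]
  · rfl

lemma swapCol_eq_of_not {e : Sym2 V} (h1 : f e ≠ some α) (h2 : f e ≠ some β) :
    swapCol M f α β x₀ e = f e := by
  unfold swapCol
  rw [if_neg]
  rintro ⟨h, -⟩
  tauto

include hnd hdom in
lemma swapCol_eq_of_far {e : Sym2 V} {v : V} (hv : v ∈ e)
    (hfar : ¬ (kempe M f α β).Reachable x₀ v) : swapCol M f α β x₀ e = f e := by
  unfold swapCol
  rw [if_neg]
  rintro ⟨h1, h2⟩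
  exact hfar (reachable_of_cond hnd hdom h1 h2 hv)

include hnd hdom in
lemma missed_swapCol_far {v : V} (hfar : ¬ (kempe M f α β).Reachable x₀ v) (c : C) :
    Missed M (swapCol M f α β x₀) v c ↔ Missed M f v c := by
  unfold Missed
  constructor <;> intro h e heM hve <;>
    have := swapCol_eq_of_far hnd hdom (f := f) (α := α) (β := β) (x₀ := x₀) hve hfar
  · rw [← this]; exact h e heM hve
  · rw [this]; exact h e heM hve

lemma missed_swapCol_other {v : V} {c : C} (h1 : c ≠ α) (h2 : c ≠ β) :
    Missed M (swapCol M f α β x₀) v c ↔ Missed M f v c := by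
  unfold Missed
  constructor <;> intro h e heM hve hc
  · by_cases hf : (f e = some α ∨ f e = some β)
    · rcases hf with hf | hf
      · exact h1 (by rw [hf] at hc; exact (Option.some_injective _ hc).symm)
      · exact h2 (by rw [hf] at hc; exact (Option.some_injective _ hc).symm)
    · push_neg at hf
      apply h e heM hve
      rwa [swapCol_eq_of_not hf.1 hf.2]
  · have hs : swapCol M f α β x₀ e = some c := hc
    unfold swapCol at hs
    split_ifs at hs with hcond h'
    · exact h2 (Option.some_injective _ hs.symm)
    · exact h1 (Option.some_injective _ hs.symm)
    · exact h e heM hve hs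

include hab in
lemma missed_swapCol_in {v : V} (hv : (kempe M f α β).Reachable x₀ v) :
    Missed M (swapCol M f α β x₀) v α ↔ Missed M f v β := by
  constructor <;> intro h e heM hve heq
  · -- f e = some β, v in component ⇒ swapped to α
    have hcond : (f e = some α ∨ f e = some β) ∧ ∃ p ∈ e, (kempe M f α β).Reachable x₀ p :=
      ⟨Or.inr heq, v, hve, hv⟩
    have : swapCol M f α β x₀ e = some α := by
      unfold swapCol
      rw [if_pos hcond, if_neg (by rw [heq]; exact fun hh => hab (Option.some_injective _ hh).symm)]
    exact h e heM hve this
  · have hs : swapCol M f α β x₀ e = some α := heq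
    unfold swapCol at hs
    split_ifs at hs with hcond h'
    · exact hab (Option.some_injective _ hs).symm
    · rcases hcond.1 with hf | hf
      · exact absurd hf h'
      · exact h e heM hve hf
    · -- not swapped but f e = some α : then cond should hold
      exact hcond ⟨Or.inl hs, v, hve, hv⟩

include hnd hdom hprop hab in
lemma proper_swapCol : Proper M (swapCol M f α β x₀) := by
  intro e heM e' heM' hne hshare hsome heq
  obtain ⟨v, hv, hv'⟩ := hshare
  by_cases hc : (f e = some α ∨ f e = some β) ∧ ∃ p ∈ e, (kempe M f α β).Reachable x₀ p
  · by_cases hc' : (f e' = some α ∨ f e' = some β) ∧ ∃ p ∈ e', (kempe M f α β).Reachable x₀ p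
    · -- both swapped : injectivity of the swap
      have he : swapCol M f α β x₀ e = if f e = some α then some β else some α := by
        unfold swapCol; rw [if_pos hc]
      have he' : swapCol M f α β x₀ e' = if f e' = some α then some β else some α := by
        unfold swapCol; rw [if_pos hc']
      rw [he, he'] at heq
      have hfeq : f e = f e' := by
        split_ifs at heq with h1 h2 h2
        · rw [h1, h2]
        · exact absurd (Option.some_injective _ heq) hab.symm
        · exact absurd (Option.some_injective _ heq) hab
        · rcases hc.1 with h | h
          · exact absurd h h1
          · rcases hc'.1 with h' | h'
            · exact absurd h' h2
            · rw [h, h']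
      exact hprop e heM e' heM' hne ⟨v, hv, hv'⟩ (by rcases hc.1 with h | h <;> simp [h]) hfeq
    · -- e swapped, e' not : e' keeps colour; derive contradiction
      have hvS : (kempe M f α β).Reachable x₀ v := reachable_of_cond hnd hdom hc.1 hc.2 hv
      have he : swapCol M f α β x₀ e = if f e = some α then some β else some α := by
        unfold swapCol; rw [if_pos hc]
      have he' : swapCol M f α β x₀ e' = f e' := by
        unfold swapCol; rw [if_neg hc']
      rw [he, he'] at heq
      apply hc'
      constructor
      · split_ifs at heq with h1
        · exact Or.inr heq.symm
        · exact Or.inl heq.symm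
      · exact ⟨v, hv', hvS⟩
  · by_cases hc' : (f e' = some α ∨ f e' = some β) ∧ ∃ p ∈ e', (kempe M f α β).Reachable x₀ p
    · have hvS : (kempe M f α β).Reachable x₀ v := reachable_of_cond hnd hdom hc'.1 hc'.2 hv'
      have he : swapCol M f α β x₀ e = f e := by
        unfold swapCol; rw [if_neg hc]
      have he' : swapCol M f α β x₀ e' = if f e' = some α then some β else some α := by
        unfold swapCol; rw [if_pos hc']
      rw [he, he'] at heq
      apply hc
      constructor
      · split_ifs at heq with h1
        · exact Or.inr heq
        · exact Or.inl heq
      · exact ⟨v, hv, hvS⟩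
    · have he : swapCol M f α β x₀ e = f e := by unfold swapCol; rw [if_neg hc]
      have he' : swapCol M f α β x₀ e' = f e' := by unfold swapCol; rw [if_neg hc']
      rw [he, he'] at heq
      rw [he] at hsome
      exact hprop e heM e' heM' hne ⟨v, hv, hv'⟩ hsome heq

end Swap

section Rotate

variable {M : Finset (Sym2 V)}

/-- Rotating a fan: recursive recolouring. -/
lemma rotate (hnd : ∀ e ∈ M, ¬ e.IsDiag) (x : V) (ys : ℕ → V) (t : ℕ)
    (hedges : ∀ i ≤ t, s(x, ys i) ∈ M)
    (hinj : ∀ i ≤ t, ∀ j ≤ t, ys i = ys j → i = j) (γ : C) :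
    ∀ n i, t - i = n → i ≤ t → ∀ f : Sym2 V → Option C,
    (∀ e, (f e).isSome ↔ (e ∈ M ∧ e ≠ s(x, ys i))) →
    Proper M f →
    (∀ m, i ≤ m → m < t → ∃ c, f s(x, ys (m+1)) = some c ∧ Missed M f (ys m) c) →
    Missed M f x γ → Missed M f (ys t) γ →
    ∃ g : Sym2 V → Option C, (∀ e, (g e).isSome ↔ e ∈ M) ∧ Proper M g := by
  have hne : ∀ i ≤ t, ys i ≠ x := by
    intro i hi h
    exact hnd _ (hedges i hi) (by simp [Sym2.isDiag_iff_proj_eq, h])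
  intro n
  induction n with
  | zero =>
    intro i hit hi f hdom hprop _ hγx hγt
    have hit' : i = t := by omega
    subst hit'
    refine ⟨Function.update f s(x, ys i) (some γ), ?_, ?_⟩
    · intro e
      by_cases he : e = s(x, ys i)
      · subst he
        simp [Function.update_self, hedges i hi]
      · rw [Function.update_of_ne he, hdom]
        tauto
    · intro e heM e' heM' hne' hshare hsome heq
      obtain ⟨v, hv, hv'⟩ := hshare
      by_cases he : e = s(x, ys i) <;> by_cases he' : e' = s(x, ys i)
      · exact hne' (he.trans he'.symm)
      · subst he
        rw [Function.update_self, Function.update_of_ne he'] at heq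
        rcases Sym2.mem_iff.mp hv with rfl | h
        · exact hγx e' heM' hv' heq.symm
        · exact hγt e' heM' (h ▸ hv') heq.symm
      · subst he'
        rw [Function.update_self, Function.update_of_ne he] at heq
        rcases Sym2.mem_iff.mp hv' with rfl | h
        · exact hγx e heM hv heq
        · exact hγt e heM (h ▸ hv) heq
      · rw [Function.update_of_ne he, Function.update_of_ne he'] at heq
        rw [Function.update_of_ne he] at hsome
        exact hprop e heM e' heM' hne' ⟨v, hv, hv'⟩ hsome heq
  | succ n ih =>
    intro i hit hi f hdom hprop hfan hγx hγt
    have hilt : i < t := by omega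
    obtain ⟨c, hc1, hc2⟩ := hfan i le_rfl hilt
    have hysne : ys i ≠ ys (i+1) := fun h => by
      have := hinj i hi (i+1) (by omega) h; omega
    have hedne : s(x, ys i) ≠ s(x, ys (i+1)) := by
      intro h
      rw [Sym2.eq_iff] at h
      rcases h with ⟨-, h⟩ | ⟨h, -⟩
      · exact hysne h
      · exact hne (i+1) (by omega) h.symm
    set f' : Sym2 V → Option C :=
      Function.update (Function.update f s(x, ys i) (some c)) s(x, ys (i+1)) none with hf'
    have hf'i : f' s(x, ys i) = some c := by
      rw [hf', Function.update_of_ne hedne, Function.update_self]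
    have hf'i1 : f' s(x, ys (i+1)) = none := by rw [hf', Function.update_self]
    have hf'other : ∀ e, e ≠ s(x, ys i) → e ≠ s(x, ys (i+1)) → f' e = f e := by
      intro e h1 h2
      rw [hf', Function.update_of_ne h2, Function.update_of_ne h1]
    -- new domain
    have hdom' : ∀ e, (f' e).isSome ↔ (e ∈ M ∧ e ≠ s(x, ys (i+1))) := by
      intro e
      by_cases h1 : e = s(x, ys (i+1))
      · subst h1; simp [hf'i1, hedges (i+1) (by omega)]
      · by_cases h2 : e = s(x, ys i)
        · subst h2
          simp [hf'i, hedges i hi, h1]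
        · rw [hf'other e h2 h1, hdom]
          tauto
    -- new properness
    have hprop' : Proper M f' := by
      intro e heM e' heM' hne' hshare hsome heq
      obtain ⟨v, hv, hv'⟩ := hshare
      by_cases h1 : e = s(x, ys (i+1))
      · rw [h1, hf'i1] at hsome; simp at hsome
      by_cases h1' : e' = s(x, ys (i+1))
      · rw [h1', hf'i1] at heq
        rw [heq] at hsome; simp at hsome
      by_cases h2 : e = s(x, ys i) <;> by_cases h2' : e' = s(x, ys i)
      · exact hne' (h2.trans h2'.symm)
      · subst h2
        rw [hf'i, hf'other e' h2' h1'] at heq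
        rcases Sym2.mem_iff.mp hv with hvx | hvy
        · -- shared vertex x : e' clashes with old edge s(x, ys (i+1))
          refine hprop s(x, ys (i+1)) (hedges (i+1) (by omega)) e' heM'
            (Ne.symm h1') ⟨x, by simp, hvx ▸ hv'⟩ (by simp [hc1]) ?_
          rw [hc1, heq]
        · exact hc2 e' heM' (hvy ▸ hv') heq.symm
      · subst h2'
        rw [hf'i, hf'other e h2 h1] at heq
        rcases Sym2.mem_iff.mp hv' with hvx | hvy
        · refine hprop s(x, ys (i+1)) (hedges (i+1) (by omega)) e heM
            (fun hh => h1 hh.symm) ⟨x, by simp, hvx ▸ hv⟩ (by simp [hc1]) ?_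
          rw [hc1, heq]
        · exact hc2 e heM (hvy ▸ hv) heq
      · rw [hf'other e h2 h1, hf'other e' h2' h1'] at heq
        rw [hf'other e h2 h1] at hsome
        exact hprop e heM e' heM' hne' ⟨v, hv, hv'⟩ hsome heq
    -- fan for i+1
    have hfan' : ∀ m, i+1 ≤ m → m < t → ∃ c', f' s(x, ys (m+1)) = some c' ∧
        Missed M f' (ys m) c' := by
      intro m hm1 hm2
      obtain ⟨c', hc'1, hc'2⟩ := hfan m (by omega) hm2
      have hmne1 : s(x, ys (m+1)) ≠ s(x, ys i) := by
        intro h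
        rw [Sym2.eq_iff] at h
        rcases h with ⟨-, h⟩ | ⟨h, -⟩
        · have := hinj (m+1) (by omega) i (by omega) h; omega
        · exact hne i (by omega) h.symm
      have hmne2 : s(x, ys (m+1)) ≠ s(x, ys (i+1)) := by
        intro h
        rw [Sym2.eq_iff] at h
        rcases h with ⟨-, h⟩ | ⟨h, -⟩
        · have := hinj (m+1) (by omega) (i+1) (by omega) h; omega
        · exact hne (i+1) (by omega) h.symm
      refine ⟨c', by rw [hf'other _ hmne1 hmne2]; exact hc'1, ?_⟩
      intro e heM hve
      by_cases h1 : e = s(x, ys (i+1))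
      · rw [h1, hf'i1]; simp
      by_cases h2 : e = s(x, ys i)
      · -- ys m not in s(x, ys i)
        exfalso
        rw [h2] at hve
        rcases Sym2.mem_iff.mp hve with h | h
        · exact hne m (by omega) h
        · have := hinj m (by omega) i (by omega) h; omega
      · rw [hf'other e h2 h1]
        exact hc'2 e heM hve
    -- γ still missed at x
    have hγx' : Missed M f' x γ := by
      intro e heM hve
      by_cases h1 : e = s(x, ys (i+1))
      · rw [h1, hf'i1]; simp
      by_cases h2 : e = s(x, ys i)
      · rw [h2, hf'i]
        intro h
        have : c = γ := Option.some_injective _ h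
        subst this
        exact hγx s(x, ys (i+1)) (hedges (i+1) (by omega)) (by simp) hc1
      · rw [hf'other e h2 h1]
        exact hγx e heM hve
    -- γ still missed at ys t
    have hγt' : Missed M f' (ys t) γ := by
      intro e heM hve
      by_cases h1 : e = s(x, ys (i+1))
      · rw [h1, hf'i1]; simp
      by_cases h2 : e = s(x, ys i)
      · exfalso
        rw [h2] at hve
        rcases Sym2.mem_iff.mp hve with h | h
        · exact hne t le_rfl h
        · have := hinj t le_rfl i (by omega) h; omega
      · rw [hf'other e h2 h1]
        exact hγt e heM hve
    exact ih (i+1) (by omega) (by omega) f' hdom' hprop' hfan' hγx' hγt'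

end Rotate

section Extend

variable {M : Finset (Sym2 V)} {f : Sym2 V → Option C} {α β : C}

lemma kempe_deg1 (hprop : Proper M f) {v : V}
    (hmiss : Missed M f v α ∨ Missed M f v β) :
    ∀ w₁ w₂, (kempe M f α β).Adj v w₁ → (kempe M f α β).Adj v w₂ → w₁ = w₂ := by
  intro w₁ w₂ h1 h2
  by_contra hww
  have he : s(v,w₁) ≠ s(v,w₂) := by
    intro hh
    rw [Sym2.eq_iff] at hh
    rcases hh with ⟨-, h⟩ | ⟨h, -⟩
    · exact hww h
    · exact h2.1 h
  have hceq : f s(v,w₁) = f s(v,w₂) := by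
    rcases hmiss with hm | hm
    · rcases h1.2.2 with hc | hc
      · exact absurd hc (hm _ h1.2.1 (by simp))
      · rcases h2.2.2 with hc' | hc'
        · exact absurd hc' (hm _ h2.2.1 (by simp))
        · rw [hc, hc']
    · rcases h1.2.2 with hc | hc
      · rcases h2.2.2 with hc' | hc'
        · rw [hc, hc']
        · exact absurd hc' (hm _ h2.2.1 (by simp))
      · exact absurd hc (hm _ h1.2.1 (by simp))
  exact hprop _ h1.2.1 _ h2.2.1 he ⟨v, by simp, by simp⟩
    (by rcases h1.2.2 with hc | hc <;> simp [hc]) hceq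

lemma kempe_deg2 (hprop : Proper M f) :
    ∀ v w₁ w₂ w₃, (kempe M f α β).Adj v w₁ → (kempe M f α β).Adj v w₂ →
      (kempe M f α β).Adj v w₃ → w₁ = w₂ ∨ w₁ = w₃ ∨ w₂ = w₃ := by
  intro v w₁ w₂ w₃ h1 h2 h3
  have key : ∀ wa wb, (kempe M f α β).Adj v wa → (kempe M f α β).Adj v wb →
      wa ≠ wb → f s(v,wa) ≠ f s(v,wb) := by
    intro wa wb ha hb hne
    have he : s(v,wa) ≠ s(v,wb) := by
      intro hh
      rw [Sym2.eq_iff] at hh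
      rcases hh with ⟨-, h⟩ | ⟨h, -⟩
      · exact hne h
      · exact hb.1 h
    exact hprop _ ha.2.1 _ hb.2.1 he ⟨v, by simp, by simp⟩
      (by rcases ha.2.2 with hc | hc <;> simp [hc])
  rcases h1.2.2 with c1 | c1 <;> rcases h2.2.2 with c2 | c2 <;> rcases h3.2.2 with c3 | c3 <;>
    first
      | exact Or.inl (by by_contra hne; exact key _ _ h1 h2 hne (c1.trans c2.symm))
      | exact Or.inr (Or.inl (by by_contra hne; exact key _ _ h1 h3 hne (c1.trans c3.symm)))
      | exact Or.inr (Or.inr (by by_contra hne; exact key _ _ h2 h3 hne (c2.trans c3.symm)))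

/-- Vizing's extension lemma: a colouring of all of `M` except one edge can be turned
into a colouring of all of `M`. -/
lemma extend [Fintype V] {k : ℕ} {M : Finset (Sym2 V)}
    (hnd : ∀ e ∈ M, ¬ e.IsDiag)
    (hdeg : ∀ v, (M.filter (fun e => v ∈ e)).card ≤ k)
    (x y : V) (hxyM : s(x,y) ∈ M)
    (f : Sym2 V → Option (Fin (k+1)))
    (hdom : ∀ e, (f e).isSome ↔ (e ∈ M ∧ e ≠ s(x,y)))
    (hprop : Proper M f) :
    ∃ g : Sym2 V → Option (Fin (k+1)), (∀ e, (g e).isSome ↔ e ∈ M) ∧ Proper M g := by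
  classical
  set FanOK : ℕ → (ℕ → V) → Prop := fun t ys =>
    ys 0 = y ∧ (∀ i ≤ t, s(x, ys i) ∈ M) ∧ (∀ i ≤ t, ∀ j ≤ t, ys i = ys j → i = j) ∧
    (∀ m, m < t → ∃ c, f s(x, ys (m+1)) = some c ∧ Missed M f (ys m) c) with hFanOK
  have hfan0 : FanOK 0 (fun _ => y) := by
    refine ⟨rfl, ?_, ?_, ?_⟩
    · intro i hi
      have : i = 0 := by omega
      subst this; exact hxyM
    · intro i hi j hj _; omega
    · intro m hm; omega
  have hbound : ∀ t ys, FanOK t ys → t < Fintype.card V := by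
    rintro t ys ⟨-, -, hinj, -⟩
    have hinj' : Function.Injective (fun i : Fin (t+1) => ys i) := by
      intro a b hab'
      exact Fin.ext (hinj a (by omega) b (by omega) hab')
    have := Fintype.card_le_of_injective _ hinj'
    simpa using this
  set Pfan : ℕ → Prop := fun t => ∃ ys, FanOK t ys with hPfan
  set t := Nat.findGreatest Pfan (Fintype.card V) with ht
  have hPt : Pfan t := Nat.findGreatest_spec (Nat.zero_le _) ⟨fun _ => y, hfan0⟩
  obtain ⟨ys, hys0, hedges, hinj, hfan⟩ := hPt
  have hnex : ∀ i, i ≤ t → ys i ≠ x := by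
    intro i hi h
    exact hnd _ (hedges i hi) (by simp [Sym2.isDiag_iff_proj_eq, h])
  have hmax : ∀ z, s(x,z) ∈ M → (∃ c, f s(x,z) = some c ∧ Missed M f (ys t) c) →
      ∃ j, j ≤ t ∧ ys j = z := by
    intro z hzM hzc
    by_contra hzno
    push_neg at hzno
    have hP1 : Pfan (t+1) := by
      refine ⟨fun i => if i = t+1 then z else ys i, ?_, ?_, ?_, ?_⟩
      · simp [hys0]
      · intro i hi
        by_cases h : i = t+1
        · simpa [h] using hzM
        · simpa [h] using hedges i (by omega)
      · intro i hi j hj hij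
        by_cases h1 : i = t+1 <;> by_cases h2 : j = t+1
        · omega
        · simp [h1, h2] at hij
          exact absurd hij.symm (hzno j (by omega))
        · simp [h1, h2] at hij
          exact absurd hij (hzno i (by omega))
        · simp [h1, h2] at hij
          exact hinj i (by omega) j (by omega) hij
      · intro m hm
        by_cases h : m+1 = t+1
        · have hmt : m = t := by omega
          obtain ⟨c, hc1, hc2⟩ := hzc
          exact ⟨c, by simpa [h] using hc1, by simpa [hmt, show m ≠ t+1 by omega] using hc2⟩
        · obtain ⟨c, hc1, hc2⟩ := hfan m (by omega)
          exact ⟨c, by simpa [h, show m ≠ t by omega] using hc1, by simpa [show m ≠ t+1 by omega] using hc2⟩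
    have hcard : t + 1 < Fintype.card V := hbound _ _ hP1.choose_spec
    exact Nat.findGreatest_is_greatest (P := Pfan) (n := Fintype.card V) (by omega) (by omega) hP1
  obtain ⟨α, hα⟩ := exists_missed M f x (hdeg x)
  obtain ⟨β, hβ⟩ := exists_missed M f (ys t) (hdeg (ys t))
  have hdomM : ∀ e, (f e).isSome → e ∈ M := fun e h => ((hdom e).1 h).1
  have hdom0 : ∀ e, (f e).isSome ↔ (e ∈ M ∧ e ≠ s(x, ys 0)) := by rw [hys0]; exact hdom
  by_cases hβx : Missed M f x β
  · exact rotate hnd x ys t hedges hinj β t 0 (by omega) (Nat.zero_le _) f hdom0 hprop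
      (fun m _ hm => hfan m hm) hβx hβ
  · unfold Missed at hβx
    push_neg at hβx
    obtain ⟨e', heM', hxe', hfe'⟩ := hβx
    have he'eq : s(x, Sym2.Mem.other hxe') = e' := Sym2.other_spec hxe'
    set z := Sym2.Mem.other hxe' with hzdef
    have hzM : s(x,z) ∈ M := he'eq ▸ heM'
    have hfz : f s(x,z) = some β := by rw [he'eq]; exact hfe'
    have hxz : x ≠ z := by
      intro h
      exact hnd _ hzM (by simp [Sym2.isDiag_iff_proj_eq, h])
    obtain ⟨j, hjt, hjz⟩ := hmax z hzM ⟨β, hfz, hβ⟩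
    have hzy : z ≠ y := by
      intro h
      rw [h] at hfz
      have h2 := (hdom s(x,y)).1 (by simp [hfz])
      exact h2.2 rfl
    have hj0 : j ≠ 0 := fun h => hzy (by rw [← hjz, h, hys0])
    have hjt' : j ≠ t := by
      intro h
      have hzt : z = ys t := by rw [← hjz, h]
      exact hβ s(x,z) hzM (by rw [hzt]; simp) hfz
    have hj1 : 1 ≤ j := by omega
    have hjlt : j < t := by omega
    have hβw : Missed M f (ys (j-1)) β := by
      obtain ⟨c, hc1, hc2⟩ := hfan (j-1) (by omega)
      rw [show j - 1 + 1 = j by omega, hjz, hfz] at hc1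
      have : β = c := Option.some_injective _ hc1
      rwa [this]
    have habne : α ≠ β := by
      intro h
      exact hα s(x,z) hzM (by simp) (h ▸ hfz)
    -- colours on fan edges other than j are not α nor β
    have hnoα : ∀ m, m < t → f s(x, ys (m+1)) ≠ some α :=
      fun m hm => hα _ (hedges (m+1) (by omega)) (by simp)
    have hforce : ∀ m, m < t → f s(x, ys (m+1)) = some β → m + 1 = j := by
      intro m hm hc1
      by_cases heq : s(x, ys (m+1)) = s(x, z)
      · rw [Sym2.eq_iff] at heq
        rcases heq with ⟨-, h⟩ | ⟨h, -⟩
        · exact hinj (m+1) (by omega) j hjt (h.trans hjz.symm)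
        · exact absurd h hxz
      · exact absurd (hc1.trans hfz.symm)
          (hprop _ (hedges (m+1) (by omega)) _ hzM heq ⟨x, by simp, by simp⟩ (by simp [hc1]))
    by_cases hRw : (kempe M f α β).Reachable x (ys (j-1))
    · -- case (ii): swap the component of `ys t`
      have hRt : ¬ (kempe M f α β).Reachable x (ys t) := by
        intro hRt
        refine three (kempe_deg2 hprop) (kempe_deg1 hprop (Or.inl hα))
          (kempe_deg1 hprop (Or.inr hβw)) (kempe_deg1 hprop (Or.inr hβ))
          ?_ ?_ ?_ hRw hRt
        · exact (hnex (j-1) (by omega)).symm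
        · exact (hnex t le_rfl).symm
        · intro h
          have := hinj (j-1) (by omega) t le_rfl h
          omega
      have hfarx : ¬ (kempe M f α β).Reachable (ys t) x := fun h => hRt h.symm
      have hfarw : ¬ (kempe M f α β).Reachable (ys t) (ys (j-1)) :=
        fun h => hRt (hRw.trans h.symm)
      set f' := swapCol M f α β (ys t) with hf'
      have hdom' : ∀ e, (f' e).isSome ↔ (e ∈ M ∧ e ≠ s(x, ys 0)) := by
        intro e
        rw [hf', swapCol_isSome]
        exact hdom0 e
      have hprop' : Proper M f' := proper_swapCol hnd hdomM hprop habne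
      have hfan' : ∀ m, 0 ≤ m → m < t → ∃ c, f' s(x, ys (m+1)) = some c ∧
          Missed M f' (ys m) c := by
        intro m _ hm
        obtain ⟨c, hc1, hc2⟩ := hfan m hm
        by_cases hcβ : c = β
        · subst hcβ
          have hmj : m + 1 = j := hforce m hm hc1
          have hmw : ys m = ys (j-1) := by rw [show m = j - 1 by omega]
          refine ⟨c, ?_, ?_⟩
          · rw [hf', swapCol_eq_of_far hnd hdomM (Sym2.mem_mk_left _ _) hfarx]
            exact hc1
          · rw [hmw, hf']
            exact (missed_swapCol_far hnd hdomM hfarw c).2 (by rwa [← hmw])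
        · have hcα : c ≠ α := by
            intro h
            exact hnoα m hm (h ▸ hc1)
          refine ⟨c, ?_, ?_⟩
          · rw [hf', swapCol_eq_of_not (by rw [hc1]; simp [hcα]) (by rw [hc1]; simp [hcβ])]
            exact hc1
          · rw [hf']
            exact (missed_swapCol_other hcα hcβ).2 hc2
      have hγx' : Missed M f' x α := by
        rw [hf']
        exact (missed_swapCol_far hnd hdomM hfarx α).2 hα
      have hγt' : Missed M f' (ys t) α := by
        rw [hf']
        exact (missed_swapCol_in habne (SimpleGraph.Reachable.refl _)).2 hβ
      exact rotate hnd x ys t hedges hinj α t 0 (by omega) (Nat.zero_le _) f' hdom' hprop'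
        hfan' hγx' hγt'
    · -- case (i): swap the component of `w = ys (j-1)` and use the prefix fan
      have hfarx : ¬ (kempe M f α β).Reachable (ys (j-1)) x := fun h => hRw h.symm
      set f' := swapCol M f α β (ys (j-1)) with hf'
      have hdom' : ∀ e, (f' e).isSome ↔ (e ∈ M ∧ e ≠ s(x, ys 0)) := by
        intro e
        rw [hf', swapCol_isSome]
        exact hdom0 e
      have hprop' : Proper M f' := proper_swapCol hnd hdomM hprop habne
      have hfan' : ∀ m, 0 ≤ m → m < j-1 → ∃ c, f' s(x, ys (m+1)) = some c ∧
          Missed M f' (ys m) c := by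
        intro m _ hm
        obtain ⟨c, hc1, hc2⟩ := hfan m (by omega)
        have hcβ : c ≠ β := by
          intro h
          have := hforce m (by omega) (h ▸ hc1)
          omega
        have hcα : c ≠ α := by
          intro h
          exact hnoα m (by omega) (h ▸ hc1)
        refine ⟨c, ?_, ?_⟩
        · rw [hf', swapCol_eq_of_not (by rw [hc1]; simp [hcα]) (by rw [hc1]; simp [hcβ])]
          exact hc1
        · rw [hf']
          exact (missed_swapCol_other hcα hcβ).2 hc2
      have hγx' : Missed M f' x α := by
        rw [hf']
        exact (missed_swapCol_far hnd hdomM hfarx α).2 hα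
      have hγw' : Missed M f' (ys (j-1)) α := by
        rw [hf']
        exact (missed_swapCol_in habne (SimpleGraph.Reachable.refl _)).2 hβw
      exact rotate hnd x ys (j-1) (fun i hi => hedges i (by omega))
        (fun i hi i' hi' => hinj i (by omega) i' (by omega)) α (j-1) 0 (by omega)
        (Nat.zero_le _) f' hdom' hprop' hfan' hγx' hγw'

/-- Vizing's theorem, in the form we need. -/
lemma vizing [Fintype V] {k : ℕ} :
    ∀ M : Finset (Sym2 V), (∀ e ∈ M, ¬ e.IsDiag) →
    (∀ v, (M.filter (fun e => v ∈ e)).card ≤ k) →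
    ∃ f : Sym2 V → Option (Fin (k+1)), (∀ e, (f e).isSome ↔ e ∈ M) ∧ Proper M f := by
  intro M
  induction M using Finset.strongInduction with
  | _ M ih =>
    intro hnd hdeg
    rcases M.eq_empty_or_nonempty with rfl | ⟨e0, he0⟩
    · exact ⟨fun _ => none, by simp, fun e he => absurd he (by simp)⟩
    · induction e0 with
      | _ x y =>
        have hss : M.erase s(x,y) ⊂ M := Finset.erase_ssubset he0
        obtain ⟨f, hfdom, hfprop⟩ := ih (M.erase s(x,y)) hss
          (fun e he => hnd e (Finset.mem_of_mem_erase he))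
          (fun v => le_trans (Finset.card_le_card
            (Finset.filter_subset_filter _ (Finset.erase_subset _ _))) (hdeg v))
        have hdom' : ∀ e, (f e).isSome ↔ (e ∈ M ∧ e ≠ s(x,y)) := by
          intro e
          rw [hfdom, Finset.mem_erase]
          tauto
        have hpropM : Proper M f := by
          intro e heM e' heM' hne hsh hsome heq
          have hsome' : (f e').isSome := by rw [← heq]; exact hsome
          exact hfprop e ((hfdom e).1 hsome) e' ((hfdom e').1 hsome') hne hsh hsome heq
        exact extend hnd hdeg x y he0 f hdom' hpropM

end Extend

end VizingAux

variable {V : Type*}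

def IsKMatching (G : SimpleGraph V) (k : ℕ) (M : Finset (Sym2 V)) : Prop :=
  (↑M : Set (Sym2 V)) ⊆ G.edgeSet ∧ ∀ v : V, (M.filter (fun e => v ∈ e)).card ≤ k

def IsProperPartialColoring (G : SimpleGraph V) (k : ℕ)
    (f : Sym2 V → Option (Fin k)) : Prop :=
  (∀ e, (f e).isSome → e ∈ G.edgeSet) ∧
  ∀ e e', e ∈ G.edgeSet → e' ∈ G.edgeSet → e ≠ e' → (∃ v, v ∈ e ∧ v ∈ e') →
    (f e).isSome → (f e').isSome → f e ≠ f e'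

noncomputable def coloringSize [Fintype V] (G : SimpleGraph V) {k : ℕ}
    (f : Sym2 V → Option (Fin k)) : ℕ :=
  (G.edgeFinset.filter (fun e => (f e).isSome)).card

theorem kMatching_vs_kEdgeColoring [Fintype V]
    (G : SimpleGraph V) (k : ℕ) (hk : 0 < k)
    -- `sstar` is the maximum size of a `k`-matching in `G`
    (sstar : ℕ)
    (hs_max : ∀ M : Finset (Sym2 V), IsKMatching G k M → M.card ≤ sstar)
    (hs_ach : ∃ M : Finset (Sym2 V), IsKMatching G k M ∧ M.card = sstar)
    -- `pstar` is the maximum size of a proper partial `k`-edge-coloring of `G`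
    (pstar : ℕ)
    (hp_max : ∀ g : Sym2 V → Option (Fin k), IsProperPartialColoring G k g →
      coloringSize G g ≤ pstar)
    (hp_ach : ∃ g : Sym2 V → Option (Fin k), IsProperPartialColoring G k g ∧
      coloringSize G g = pstar) :
    pstar ≤ sstar ∧ (sstar : ℝ) ≤ (((k : ℝ) + 1) / (k : ℝ)) * (pstar : ℝ) := by
  classical
  constructor
  · -- lower bound : the set of coloured edges is a k-matching
    obtain ⟨g, hgprop, hgsize⟩ := hp_ach
    set M : Finset (Sym2 V) := G.edgeFinset.filter (fun e => (g e).isSome) with hM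
    have hKM : IsKMatching G k M := by
      constructor
      · intro e he
        rw [Finset.mem_coe, hM, Finset.mem_filter, SimpleGraph.mem_edgeFinset] at he
        exact he.1
      · intro v
        have hinj : (M.filter (fun e => v ∈ e)).card ≤ (Finset.univ : Finset (Fin k)).card := by
          apply Finset.card_le_card_of_injOn (fun e => (g e).getD ⟨0, hk⟩)
          · intro e _; exact Finset.mem_univ _
          · intro e he e' he' heq
            by_contra hne
            simp only [Finset.coe_filter, Set.mem_setOf_eq, hM, Finset.mem_filter,
              SimpleGraph.mem_edgeFinset] at he he'
            obtain ⟨⟨heG, hgs⟩, hve⟩ := he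
            obtain ⟨⟨heG', hgs'⟩, hve'⟩ := he'
            obtain ⟨a, ha⟩ := Option.isSome_iff_exists.1 hgs
            obtain ⟨a', ha'⟩ := Option.isSome_iff_exists.1 hgs'
            apply hgprop.2 e e' heG heG' hne ⟨v, hve, hve'⟩ hgs hgs'
            simp only [ha, ha', Option.getD_some] at heq
            rw [ha, ha', heq]
        simpa using hinj
    have hps : pstar = M.card := by rw [← hgsize]; rfl
    rw [hps]
    exact hs_max M hKM
  · -- upper bound, via Vizing's theorem
    obtain ⟨M, ⟨hsub, hdeg⟩, hMcard⟩ := hs_ach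
    have hnd : ∀ e ∈ M, ¬ e.IsDiag := fun e he =>
      (G.not_isDiag_of_mem_edgeSet (hsub he))
    obtain ⟨F, hFdom, hFprop⟩ := VizingAux.vizing M hnd hdeg
    set φ : Sym2 V → Fin (k+1) := fun e => (F e).getD ⟨0, Nat.succ_pos k⟩ with hφ
    have hsum : ∑ c : Fin (k+1), (M.filter (fun e => φ e = c)).card = M.card :=
      (Finset.card_eq_sum_card_fiberwise (fun e _ => Finset.mem_univ (φ e))).symm
    obtain ⟨c₀, -, hc₀⟩ := Finset.exists_min_image (Finset.univ : Finset (Fin (k+1)))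
      (fun c => (M.filter (fun e => φ e = c)).card) ⟨0, Finset.mem_univ 0⟩
    set n₀ := (M.filter (fun e => φ e = c₀)).card with hn₀
    have hmin : (k+1) * n₀ ≤ M.card := by
      calc (k+1) * n₀ = ∑ _c : Fin (k+1), n₀ := by
            rw [Finset.sum_const, Finset.card_univ, Fintype.card_fin, smul_eq_mul]
        _ ≤ ∑ c : Fin (k+1), (M.filter (fun e => φ e = c)).card :=
            Finset.sum_le_sum (fun c _ => hc₀ c (Finset.mem_univ c))
        _ = M.card := hsum
    -- repack as a proper partial k-colouring by dropping the smallest colour class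
    set σ := Equiv.swap c₀ (Fin.last k) with hσ
    set g' : Sym2 V → Option (Fin k) := fun e =>
      (F e).bind (fun c => if h : σ c = Fin.last k then none else some ((σ c).castPred h))
      with hg'
    have hFsome : ∀ {e : Sym2 V} {c : Fin (k+1)}, F e = some c → e ∈ M :=
      fun {e c} h => (hFdom e).1 (by simp [h])
    have hg'some : ∀ e, (g' e).isSome ↔ (e ∈ M ∧ F e ≠ some c₀) := by
      intro e
      rw [hg']
      cases hFe : F e with
      | none =>
        simp only [hFe, Option.bind_none, Option.isSome_none]
        constructor
        · intro h; simp at h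
        · rintro ⟨heM, -⟩
          exact absurd ((hFdom e).2 heM) (by simp [hFe])
      | some c =>
        have heM : e ∈ M := hFsome hFe
        simp only [hFe]
        by_cases h : σ c = Fin.last k
        · have hcc : c = c₀ :=
            σ.injective (h.trans (Equiv.swap_apply_left c₀ (Fin.last k)).symm)
          subst hcc
          simp [h, heM]
        · have hcc : c ≠ c₀ := by
            intro hcc
            exact h (by rw [hcc, hσ, Equiv.swap_apply_left])
          simp [h, heM, hcc]
    have hg'prop : IsProperPartialColoring G k g' := by
      constructor
      · intro e he
        exact hsub ((hg'some e).1 he).1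
      · intro e e' heG heG' hne hsh hs hs'
        obtain ⟨heM, hc⟩ := (hg'some e).1 hs
        obtain ⟨heM', hc'⟩ := (hg'some e').1 hs'
        obtain ⟨c, hFe⟩ := Option.isSome_iff_exists.1 ((hFdom e).2 heM)
        obtain ⟨c', hFe'⟩ := Option.isSome_iff_exists.1 ((hFdom e').2 heM')
        intro heq
        have hFne : F e ≠ F e' := hFprop e heM e' heM' hne hsh (by simp [hFe])
        apply hFne
        rw [hg'] at heq
        simp only [hFe, hFe', Option.bind_some] at heq
        rw [hFe, hFe']
        by_cases h1 : σ c = Fin.last k <;> by_cases h2 : σ c' = Fin.last k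
        · rw [show c = c' from σ.injective (h1.trans h2.symm)]
        · simp [h1, h2] at heq
        · simp [h1, h2] at heq
        · rw [dif_neg h1, dif_neg h2] at heq
          have heq' : (σ c).castPred h1 = (σ c').castPred h2 := Option.some_injective _ heq
          have : (σ c) = (σ c') := by
            rw [← Fin.castSucc_castPred (σ c) h1, ← Fin.castSucc_castPred (σ c') h2, heq']
          rw [show c = c' from σ.injective this]
    have hsize : coloringSize G g' + n₀ = M.card := by
      have hfe : G.edgeFinset.filter (fun e => (g' e).isSome) =
          M.filter (fun e => ¬ φ e = c₀) := by
        ext e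
        simp only [Finset.mem_filter, SimpleGraph.mem_edgeFinset]
        constructor
        · rintro ⟨-, hsome⟩
          obtain ⟨heM, hc⟩ := (hg'some e).1 hsome
          refine ⟨heM, ?_⟩
          intro hφc
          apply hc
          obtain ⟨c, hFe⟩ := Option.isSome_iff_exists.1 ((hFdom e).2 heM)
          rw [hFe]
          rw [hφ] at hφc
          simp only [hFe, Option.getD_some] at hφc
          rw [hφc]
        · rintro ⟨heM, hφc⟩
          refine ⟨hsub heM, ?_⟩
          rw [hg'some]
          refine ⟨heM, ?_⟩
          intro hFe
          exact hφc (by rw [hφ]; simp [hFe])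
      rw [coloringSize, hfe, hn₀, add_comm]
      exact Finset.card_filter_add_card_filter_not (p := fun e => φ e = c₀)
    have hle : coloringSize G g' ≤ pstar := hp_max g' hg'prop
    have hkb : k * n₀ ≤ coloringSize G g' := by
      have h := hmin
      rw [Nat.succ_mul] at h
      omega
    have hfinal : k * sstar ≤ (k+1) * pstar := by
      have hka : k * coloringSize G g' ≤ k * pstar := Nat.mul_le_mul_left k hle
      calc k * sstar = k * M.card := by rw [hMcard]
        _ = k * (coloringSize G g' + n₀) := by rw [hsize]
        _ = k * coloringSize G g' + k * n₀ := by ring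
        _ ≤ k * pstar + coloringSize G g' := Nat.add_le_add hka hkb
        _ ≤ k * pstar + pstar := Nat.add_le_add_left hle _
        _ = (k+1) * pstar := by ring
    have hkR : (0:ℝ) < (k:ℝ) := by exact_mod_cast hk
    rw [div_mul_eq_mul_div, le_div_iff₀ hkR]
    have hcast : (k:ℝ) * (sstar:ℝ) ≤ ((k:ℝ)+1) * (pstar:ℝ) := by exact_mod_cast hfinal
    linarith
end

section
/- Let G be a finite bipartite graph and b: V → ℕ. Then the fractional b-matching polytope P(G) = { x ∈ [0,1]^E : for all v ∈ V, Σ_{e ∋ v} x_e ≤ b_v } is integral: every vertex (extreme point) of P(G) has all coordinates in {0,1}. -/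
open Finset
open scoped Classical

variable {V : Type*}

/-- Membership in the fractional `b`-matching polytope of `G`:
edge-indexed vectors in `[0,1]`, supported on the edges of `G`, satisfying the degree
constraints `∑_{e ∋ v} x_e ≤ b v`. -/
def InBMatchingPolytope [Fintype V] (G : SimpleGraph V) (b : V → ℕ)
    (x : Sym2 V → ℝ) : Prop :=
  (∀ e, 0 ≤ x e ∧ x e ≤ 1) ∧ (∀ e ∉ G.edgeSet, x e = 0) ∧
  ∀ v : V, ∑ e ∈ G.edgeFinset.filter (fun e => v ∈ e), x e ≤ (b v : ℝ)

/-- A sum of values each equal to `0` or `1` is a natural number. -/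
lemma sum_mem_zero_one {α : Type*} (s : Finset α) (x : α → ℝ)
    (h : ∀ e ∈ s, x e = 0 ∨ x e = 1) : ∃ n : ℕ, ∑ e ∈ s, x e = n := by
  classical
  induction s using Finset.induction_on with
  | empty => exact ⟨0, by simp⟩
  | @insert a s ha ih =>
    obtain ⟨n, hn⟩ := ih (fun e he => h e (mem_insert_of_mem he))
    rcases h a (mem_insert_self a s) with h0 | h1
    · exact ⟨n, by rw [Finset.sum_insert ha, h0, hn, zero_add]⟩
    · exact ⟨n + 1, by rw [Finset.sum_insert ha, h1, hn]; push_cast; ring⟩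

/-- If all but one value in a sum are `0` or `1` and the remaining one is strictly
fractional, the sum is not a natural number. -/
lemma frac_not_nat {α : Type*} (s : Finset α) (x : α → ℝ) (f : α) (hf : f ∈ s)
    (hothers : ∀ e ∈ s, e ≠ f → x e = 0 ∨ x e = 1)
    (h0 : 0 < x f) (h1 : x f < 1) (n : ℕ) : ∑ e ∈ s, x e ≠ (n : ℝ) := by
  intro hsum
  obtain ⟨m, hm⟩ := sum_mem_zero_one (s.erase f) x
    (fun e he => hothers e (mem_of_mem_erase he) (ne_of_mem_erase he))
  rw [← Finset.add_sum_erase s x hf, hm] at hsum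
  have hxf : x f = (n : ℝ) - m := by linarith
  rcases le_or_gt n m with h | h
  · have : (n : ℝ) ≤ m := by exact_mod_cast h
    linarith
  · have : (m : ℝ) + 1 ≤ n := by exact_mod_cast h
    linarith

/-- Key lemma: given a nonempty set `F` of edges of a bipartite graph (with parts given
by `A`), there is a nonzero vector `d` supported on `F` whose sum over the edges at `v`
vanishes at every vertex `v` of `F`-degree at least two. -/
lemma exists_direction [Fintype V] (A : Set V) (F : Finset (Sym2 V)) (hF : F.Nonempty)
    (hFe : ∀ e ∈ F, ∀ u w : V, e = s(u, w) → u ≠ w ∧ (u ∈ A ↔ w ∉ A)) :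
    ∃ d : Sym2 V → ℝ, (∃ e, d e ≠ 0) ∧ (∀ e ∉ F, d e = 0) ∧
      ∀ v : V, 2 ≤ (F.filter (fun e => v ∈ e)).card →
        ∑ e ∈ F.filter (fun e => v ∈ e), d e = 0 := by
  classical
  set deg : V → ℕ := fun v => (F.filter (fun e => v ∈ e)).card with hdeg
  set S : Finset V := univ.filter (fun v => 2 ≤ deg v) with hS
  -- handshake
  have hcard2 : ∀ e ∈ F, (univ.filter (fun v : V => v ∈ e)).card = 2 := by
    intro e he
    induction e using Sym2.ind with
    | _ u w =>
      obtain ⟨huw, _⟩ := hFe _ he u w rfl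
      have : univ.filter (fun v : V => v ∈ s(u, w)) = {u, w} := by
        ext v; simp [Sym2.mem_iff]
      rw [this, Finset.card_pair huw]
  have handshake : ∑ v : V, deg v = 2 * F.card := by
    calc ∑ v : V, deg v = ∑ v : V, ∑ e ∈ F, if v ∈ e then 1 else 0 := by
          apply Finset.sum_congr rfl; intro v _
          exact Finset.card_filter _ _
      _ = ∑ e ∈ F, ∑ v : V, if v ∈ e then 1 else 0 := Finset.sum_comm
      _ = ∑ e ∈ F, (univ.filter (fun v : V => v ∈ e)).card := by
          apply Finset.sum_congr rfl; intro e _; rw [Finset.card_filter]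
      _ = ∑ e ∈ F, 2 := Finset.sum_congr rfl hcard2
      _ = 2 * F.card := by rw [Finset.sum_const, smul_eq_mul, mul_comm]
  -- the incidence-type linear map
  let L : (↥F → ℝ) →ₗ[ℝ] (↥S → ℝ) :=
    { toFun := fun d v => ∑ e : ↥F, if (v : V) ∈ (e : Sym2 V) then d e else 0
      map_add' := by
        intro a c; funext v
        simp only [Pi.add_apply]
        rw [← Finset.sum_add_distrib]
        apply Finset.sum_congr rfl; intro e _; split <;> simp
      map_smul' := by
        intro r a; funext v
        simp only [Pi.smul_apply, smul_eq_mul, RingHom.id_apply]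
        rw [Finset.mul_sum]
        apply Finset.sum_congr rfl; intro e _; split <;> simp }
  have hdimF : Module.finrank ℝ (↥F → ℝ) = F.card := by
    rw [Module.finrank_pi, Fintype.card_coe]
  have hdimS : Module.finrank ℝ (↥S → ℝ) = S.card := by
    rw [Module.finrank_pi, Fintype.card_coe]
  -- there is a nonzero kernel element
  have hker : ∃ d0 : ↥F → ℝ, d0 ≠ 0 ∧ L d0 = 0 := by
    by_cases h1 : ∃ v : V, deg v = 1
    · -- some degree-1 vertex : |S| < |F|, so L can't be injective
      have hcard : S.card < F.card := by
        obtain ⟨v1, hv1⟩ := h1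
        have hsplit : ∑ v ∈ S, deg v + ∑ v ∈ univ.filter (fun v => ¬ 2 ≤ deg v), deg v
            = 2 * F.card := by
          rw [hS, Finset.sum_filter_add_sum_filter_not, handshake]
        have hlow : 2 * S.card ≤ ∑ v ∈ S, deg v := by
          have h := Finset.card_nsmul_le_sum S deg 2 (fun v hv => (mem_filter.mp hv).2)
          rw [smul_eq_mul] at h
          calc 2 * S.card = S.card * 2 := mul_comm _ _
            _ ≤ S.sum deg := h
            _ = ∑ v ∈ S, deg v := rfl
        have hone : 1 ≤ ∑ v ∈ univ.filter (fun v => ¬ 2 ≤ deg v), deg v := by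
          have hv1mem : v1 ∈ univ.filter (fun v => ¬ 2 ≤ deg v) := by
            simp [hv1]
          calc 1 = deg v1 := hv1.symm
            _ ≤ _ := Finset.single_le_sum (fun v _ => Nat.zero_le _) hv1mem
        omega
      by_contra hcon
      push_neg at hcon
      have hinj : Function.Injective L := by
        rw [← LinearMap.ker_eq_bot, LinearMap.ker_eq_bot']
        intro d0 hd0
        by_contra hne
        exact hcon d0 hne hd0
      have := LinearMap.finrank_le_finrank_of_injective hinj
      omega
    · -- no degree-1 vertex: use the bipartite hyperplane
      push_neg at h1
      have hend : ∀ e ∈ F, ∀ v, v ∈ e → v ∈ S := by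
        intro e he v hv
        have h2 : 1 ≤ deg v := Finset.card_pos.mpr ⟨e, mem_filter.mpr ⟨he, hv⟩⟩
        have h3 := h1 v
        simp only [hS, mem_filter, mem_univ, true_and]
        omega
      have hSne : S.Nonempty := by
        obtain ⟨e, he⟩ := hF
        exact ⟨e.out.1, hend e he _ (Sym2.out_fst_mem e)⟩
      have hcardle : S.card ≤ F.card := by
        have hlow : 2 * S.card ≤ ∑ v ∈ S, deg v := by
          have h := Finset.card_nsmul_le_sum S deg 2 (fun v hv => (mem_filter.mp hv).2)
          rw [smul_eq_mul] at h
          calc 2 * S.card = S.card * 2 := mul_comm _ _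
            _ ≤ S.sum deg := h
            _ = ∑ v ∈ S, deg v := rfl
        have hle : ∑ v ∈ S, deg v ≤ ∑ v : V, deg v :=
          Finset.sum_le_sum_of_subset (subset_univ S)
        omega
      set sgn : V → ℝ := fun v => if v ∈ A then 1 else -1 with hsgn
      let φ : (↥S → ℝ) →ₗ[ℝ] ℝ :=
        { toFun := fun y => ∑ v : ↥S, sgn v * y v
          map_add' := by
            intro a c
            simp only [Pi.add_apply, mul_add]
            rw [← Finset.sum_add_distrib]
          map_smul' := by
            intro r a
            simp only [Pi.smul_apply, smul_eq_mul, RingHom.id_apply]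
            rw [Finset.mul_sum]
            apply Finset.sum_congr rfl; intro v _; ring }
      have hinner : ∀ e : ↥F,
          ∑ v : ↥S, (if (v : V) ∈ (e : Sym2 V) then sgn v else 0) = 0 := by
        intro e
        rw [Finset.sum_coe_sort S (fun v => if v ∈ (e : Sym2 V) then sgn v else 0)]
        rw [← Finset.sum_filter]
        obtain ⟨e, he⟩ := e
        induction e using Sym2.ind with
        | _ u w =>
          obtain ⟨huw, hAuw⟩ := hFe _ he u w rfl
          have hfil : S.filter (fun v => v ∈ s(u, w)) = {u, w} := by
            ext v
            simp only [mem_filter, Sym2.mem_iff, mem_insert, mem_singleton]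
            constructor
            · rintro ⟨_, h⟩; exact h
            · rintro (rfl | rfl)
              · exact ⟨hend _ he v (by simp), Or.inl rfl⟩
              · exact ⟨hend _ he v (by simp), Or.inr rfl⟩
          rw [hfil, Finset.sum_pair huw]
          by_cases hu : u ∈ A
          · have hw : w ∉ A := (hAuw).mp hu
            simp [hsgn, hu, hw]
          · have hw : w ∈ A := by
              by_contra hw
              exact hu ((hAuw).mpr hw)
            simp [hsgn, hu, hw]
      have hφL : ∀ d0 : ↥F → ℝ, φ (L d0) = 0 := by
        intro d0
        show ∑ v : ↥S, sgn v * ∑ e : ↥F, (if (v : V) ∈ (e : Sym2 V) then d0 e else 0) = 0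
        calc ∑ v : ↥S, sgn v * ∑ e : ↥F, (if (v : V) ∈ (e : Sym2 V) then d0 e else 0)
            = ∑ v : ↥S, ∑ e : ↥F,
                (if (v : V) ∈ (e : Sym2 V) then sgn v else 0) * d0 e := by
              apply Finset.sum_congr rfl; intro v _
              rw [Finset.mul_sum]
              apply Finset.sum_congr rfl; intro e _
              split <;> simp
          _ = ∑ e : ↥F, (∑ v : ↥S,
                (if (v : V) ∈ (e : Sym2 V) then sgn v else 0)) * d0 e := by
              rw [Finset.sum_comm]
              apply Finset.sum_congr rfl; intro e _
              rw [Finset.sum_mul]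
          _ = 0 := by
              apply Finset.sum_eq_zero; intro e _
              rw [hinner e, zero_mul]
      have hφne : ∃ y : ↥S → ℝ, φ y ≠ 0 := by
        obtain ⟨v0, hv0⟩ := hSne
        refine ⟨fun w => if w = ⟨v0, hv0⟩ then 1 else 0, ?_⟩
        have : φ (fun w => if w = ⟨v0, hv0⟩ then 1 else 0) = sgn v0 := by
          show ∑ v : ↥S, sgn v * (if v = ⟨v0, hv0⟩ then 1 else 0) = sgn v0
          rw [Finset.sum_eq_single (⟨v0, hv0⟩ : ↥S)]
          · simp
          · intro w _ hw; simp [hw]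
          · intro h; exact absurd (Finset.mem_univ _) h
        rw [this]
        by_cases hA0 : v0 ∈ A <;> simp [hsgn, hA0]
      have hφsurj : Function.Surjective φ := by
        obtain ⟨y, hy⟩ := hφne
        intro c
        refine ⟨(c / φ y) • y, ?_⟩
        rw [map_smul, smul_eq_mul, div_mul_cancel₀ _ hy]
      have hrankφ : Module.finrank ℝ ↥(LinearMap.ker φ) + 1 = S.card := by
        have h := LinearMap.finrank_range_add_finrank_ker φ
        rw [LinearMap.range_eq_top.mpr hφsurj, hdimS] at h
        simp only [finrank_top, Module.finrank_self] at h
        omega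
      have hrange : LinearMap.range L ≤ LinearMap.ker φ := by
        rintro y ⟨d0, rfl⟩
        exact LinearMap.mem_ker.mpr (hφL d0)
      have h5 : Module.finrank ℝ ↥(LinearMap.range L)
          ≤ Module.finrank ℝ ↥(LinearMap.ker φ) := Submodule.finrank_mono hrange
      have h6 := LinearMap.finrank_range_add_finrank_ker L
      rw [hdimF] at h6
      have hkerpos : 0 < Module.finrank ℝ ↥(LinearMap.ker L) := by omega
      have hne : LinearMap.ker L ≠ ⊥ := by
        intro h
        rw [h] at hkerpos
        simp at hkerpos
      obtain ⟨d0, hd0mem, hd0ne⟩ := Submodule.exists_mem_ne_zero_of_ne_bot hne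
      exact ⟨d0, hd0ne, hd0mem⟩
  obtain ⟨d0, hd0ne, hd0⟩ := hker
  refine ⟨fun e => if h : e ∈ F then d0 ⟨e, h⟩ else 0, ?_, ?_, ?_⟩
  · obtain ⟨e, he⟩ : ∃ e : ↥F, d0 e ≠ 0 := by
      by_contra h
      push_neg at h
      exact hd0ne (funext h)
    exact ⟨(e : Sym2 V), by simpa [e.2] using he⟩
  · intro e he; simp [he]
  · intro v hv
    have hvS : v ∈ S := by
      simp only [hS, mem_filter, mem_univ, true_and]
      exact hv
    have h0 := congrFun hd0 ⟨v, hvS⟩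
    have h1 : ∑ e : ↥F, (if (v : V) ∈ (e : Sym2 V) then d0 e else 0) = 0 := h0
    have h2 : ∑ e ∈ F, (if v ∈ e then (if h : e ∈ F then d0 ⟨e, h⟩ else 0) else 0)
        = ∑ e : ↥F, (if (v : V) ∈ (e : Sym2 V) then d0 e else 0) := by
      rw [← Finset.sum_coe_sort F
        (fun e => if v ∈ e then (if h : e ∈ F then d0 ⟨e, h⟩ else 0) else 0)]
      apply Finset.sum_congr rfl
      intro e _
      by_cases hve : (v : V) ∈ (e : Sym2 V)
      · simp [hve, e.2]
      · simp [hve]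
    rw [Finset.sum_filter, h2]
    exact h1

/-- The fractional `b`-matching polytope of a bipartite graph is integral: every extreme
point has all coordinates in `{0, 1}`. -/
theorem bipartite_bMatching_polytope_integral [Fintype V]
    (G : SimpleGraph V) (b : V → ℕ)
    (hbip : ∃ A : Set V, ∀ u v : V, G.Adj u v → (u ∈ A ↔ v ∉ A)) :
    ∀ x ∈ Set.extremePoints ℝ {x : Sym2 V → ℝ | InBMatchingPolytope G b x},
      ∀ e : Sym2 V, x e = 0 ∨ x e = 1 := by
  classical
  obtain ⟨A, hA⟩ := hbip
  rintro x ⟨hx, hxext⟩ e0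
  by_contra he0
  push_neg at he0
  obtain ⟨hbound, hsupp, hdeg⟩ := hx
  have he0E : e0 ∈ G.edgeSet := by
    by_contra h
    exact he0.1 (hsupp e0 h)
  set F : Finset (Sym2 V) := G.edgeFinset.filter (fun e => x e ≠ 0 ∧ x e ≠ 1) with hFdef
  have hFsub : ∀ e ∈ F, e ∈ G.edgeFinset := fun e he => (mem_filter.mp he).1
  have hFfrac : ∀ e ∈ F, 0 < x e ∧ x e < 1 := by
    intro e he
    obtain ⟨_, hne0, hne1⟩ := mem_filter.mp he |>.imp id (fun h => h)
    exact ⟨lt_of_le_of_ne (hbound e).1 (Ne.symm hne0), lt_of_le_of_ne (hbound e).2 hne1⟩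
  have hF : F.Nonempty :=
    ⟨e0, mem_filter.mpr ⟨SimpleGraph.mem_edgeFinset.mpr he0E, he0.1, he0.2⟩⟩
  have hFe : ∀ e ∈ F, ∀ u w : V, e = s(u, w) → u ≠ w ∧ (u ∈ A ↔ w ∉ A) := by
    intro e he u w hew
    have hadj : G.Adj u w := by
      have h := SimpleGraph.mem_edgeFinset.mp (hFsub e he)
      rw [hew] at h
      exact h
    exact ⟨hadj.ne, hA u w hadj⟩
  obtain ⟨d, ⟨ew, hew⟩, hdsupp, hdsum⟩ := exists_direction A F hF hFe
  set Ev : V → Finset (Sym2 V) := fun v => G.edgeFinset.filter (fun e => v ∈ e) with hEv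
  have hDv : ∀ v : V, ∑ e ∈ Ev v, d e = ∑ e ∈ F.filter (fun e => v ∈ e), d e := by
    intro v
    refine (Finset.sum_subset ?_ ?_).symm
    · intro e he
      obtain ⟨heF, hve⟩ := mem_filter.mp he
      exact mem_filter.mpr ⟨hFsub e heF, hve⟩
    · intro e heEv heNF
      apply hdsupp
      intro heF
      exact heNF (mem_filter.mpr ⟨heF, (mem_filter.mp heEv).2⟩)
  have hslack : ∀ v : V, (∑ e ∈ Ev v, d e) ≠ 0 → ∑ e ∈ Ev v, x e < b v := by
    intro v hv
    rcases lt_or_eq_of_le (hdeg v) with h | h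
    · exact h
    exfalso
    have hdlt : ¬ 2 ≤ (F.filter (fun e => v ∈ e)).card := by
      intro h2
      exact hv (by rw [hDv]; exact hdsum v h2)
    have hpos : (F.filter (fun e => v ∈ e)).Nonempty := by
      by_contra hemp
      rw [not_nonempty_iff_eq_empty] at hemp
      exact hv (by rw [hDv, hemp, Finset.sum_empty])
    have hcard1 : (F.filter (fun e => v ∈ e)).card = 1 := by
      have := Finset.card_pos.mpr hpos
      omega
    obtain ⟨f, hfeq⟩ := Finset.card_eq_one.mp hcard1
    have hfF : f ∈ F.filter (fun e => v ∈ e) := hfeq ▸ Finset.mem_singleton_self f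
    obtain ⟨hfF', hvf⟩ := mem_filter.mp hfF
    have hfmem : f ∈ Ev v := mem_filter.mpr ⟨hFsub f hfF', hvf⟩
    refine frac_not_nat (Ev v) x f hfmem ?_ (hFfrac f hfF').1 (hFfrac f hfF').2 (b v) h
    intro e heEv hne
    obtain ⟨heE, hve⟩ := mem_filter.mp heEv
    by_cases heF : e ∈ F
    · exfalso
      have : e ∈ F.filter (fun e => v ∈ e) := mem_filter.mpr ⟨heF, hve⟩
      rw [hfeq, Finset.mem_singleton] at this
      exact hne this
    · rw [hFdef, Finset.mem_filter] at heF
      push_neg at heF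
      by_cases h0 : x e = 0
      · exact Or.inl h0
      · exact Or.inr (heF heE h0)
  -- choose epsilon
  set TV : Finset V := univ.filter (fun v => (∑ e ∈ Ev v, d e) ≠ 0) with hTV
  set ε1 : ℝ := F.inf' hF (fun e => min (x e) (1 - x e) / (|d e| + 1)) with hε1
  set ε2 : ℝ := (insert (1 : ℝ)
      (TV.image (fun v => ((b v : ℝ) - ∑ e ∈ Ev v, x e) / |∑ e ∈ Ev v, d e|))).inf'
      (insert_nonempty _ _) id with hε2
  set ε : ℝ := min ε1 ε2 with hεdef
  have hε1pos : 0 < ε1 := by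
    rw [hε1, Finset.lt_inf'_iff]
    intro e he
    have hfr := hFfrac e he
    have hmin : 0 < min (x e) (1 - x e) := lt_min hfr.1 (by linarith [hfr.2])
    positivity
  have hε2pos : 0 < ε2 := by
    rw [hε2, Finset.lt_inf'_iff]
    intro c hc
    rcases Finset.mem_insert.mp hc with rfl | hc
    · norm_num
    · obtain ⟨v, hvTV, rfl⟩ := Finset.mem_image.mp hc
      have hvne : (∑ e ∈ Ev v, d e) ≠ 0 := (mem_filter.mp hvTV).2
      have hsl := hslack v hvne
      have : 0 < |∑ e ∈ Ev v, d e| := abs_pos.mpr hvne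
      simp only [id]
      apply div_pos (by linarith) this
  have hεpos : 0 < ε := lt_min hε1pos hε2pos
  have hεedge : ∀ e ∈ F, ε * |d e| < min (x e) (1 - x e) := by
    intro e he
    have h1 : ε ≤ min (x e) (1 - x e) / (|d e| + 1) :=
      le_trans (min_le_left _ _) (Finset.inf'_le _ he)
    have hfr := hFfrac e he
    have hmin : 0 < min (x e) (1 - x e) := lt_min hfr.1 (by linarith [hfr.2])
    have habs : (0 : ℝ) ≤ |d e| := abs_nonneg _
    calc ε * |d e| ≤ (min (x e) (1 - x e) / (|d e| + 1)) * |d e| :=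
          mul_le_mul_of_nonneg_right h1 habs
      _ < min (x e) (1 - x e) := by
          rw [div_mul_eq_mul_div, div_lt_iff₀ (by positivity)]
          nlinarith
  have hεvert : ∀ v : V, (∑ e ∈ Ev v, d e) ≠ 0 →
      ∑ e ∈ Ev v, x e + ε * |∑ e ∈ Ev v, d e| ≤ b v := by
    intro v hv
    have hvTV : v ∈ TV := mem_filter.mpr ⟨mem_univ v, hv⟩
    have h1 : ε ≤ ((b v : ℝ) - ∑ e ∈ Ev v, x e) / |∑ e ∈ Ev v, d e| := by
      refine le_trans (min_le_right _ _) ?_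
      exact Finset.inf'_le id (Finset.mem_insert_of_mem (Finset.mem_image_of_mem _ hvTV))
    have habs : 0 < |∑ e ∈ Ev v, d e| := abs_pos.mpr hv
    have h2 : ε * |∑ e ∈ Ev v, d e| ≤ (b v : ℝ) - ∑ e ∈ Ev v, x e := by
      rw [← div_mul_cancel₀ ((b v : ℝ) - ∑ e ∈ Ev v, x e) (ne_of_gt habs)]
      exact mul_le_mul_of_nonneg_right h1 (le_of_lt habs)
    linarith
  -- the two perturbed points are in the polytope
  have hmem : ∀ s : ℝ, |s| = ε → InBMatchingPolytope G b (fun e => x e + s * d e) := by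
    intro s hs
    have hsabs : ∀ r : ℝ, |s * r| = ε * |r| := fun r => by rw [abs_mul, hs]
    refine ⟨?_, ?_, ?_⟩
    · intro e
      show 0 ≤ x e + s * d e ∧ x e + s * d e ≤ 1
      by_cases he : e ∈ F
      · have h2 : |s * d e| < min (x e) (1 - x e) := by
          rw [hsabs]; exact hεedge e he
        obtain ⟨h3, h4⟩ := lt_min_iff.mp h2
        constructor
        · have := neg_abs_le (s * d e)
          linarith
        · have := le_abs_self (s * d e)
          linarith
      · rw [hdsupp e he, mul_zero, add_zero]
        exact hbound e
    · intro e he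
      have heF : e ∉ F := fun h => he (SimpleGraph.mem_edgeFinset.mp (hFsub e h))
      show x e + s * d e = 0
      rw [hsupp e he, hdsupp e heF, mul_zero, add_zero]
    · intro v
      show ∑ e ∈ Ev v, (x e + s * d e) ≤ (b v : ℝ)
      rw [Finset.sum_add_distrib, ← Finset.mul_sum]
      by_cases hv : (∑ e ∈ Ev v, d e) = 0
      · rw [hv, mul_zero, add_zero]
        exact hdeg v
      · have h1 := hεvert v hv
        have h2 : s * ∑ e ∈ Ev v, d e ≤ ε * |∑ e ∈ Ev v, d e| := by
          rw [← hsabs]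
          exact le_abs_self _
        linarith
  have hy := hmem ε (abs_of_pos hεpos)
  have hz := hmem (-ε) (by rw [abs_neg]; exact abs_of_pos hεpos)
  have hseg : x ∈ openSegment ℝ (fun e => x e + ε * d e) (fun e => x e + (-ε) * d e) := by
    rw [openSegment_eq_image]
    refine ⟨1/2, by norm_num, ?_⟩
    funext e
    simp only [Pi.add_apply, Pi.smul_apply, smul_eq_mul]
    ring
  obtain h1 := hxext hy hz hseg
  have h2 : x ew + ε * d ew = x ew := congrFun h1 ew
  have h3 : ε * d ew = 0 := by linarith
  rcases mul_eq_zero.mp h3 with h | h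
  · exact absurd h (ne_of_gt hεpos)
  · exact hew h
end

section
/- Let G be a finite simple graph and b: V → ℕ. Then the fractional b-matching polytope P(G) = { x ∈ [0,1]^E : for all v ∈ V, Σ_{e ∋ v} x_e ≤ b_v } is half-integral: every extreme point of P(G) has all coordinates in {0, 1/2, 1}. -/
open Finset
open scoped Classical

variable {V : Type*}

lemma sumIsInt {α : Type*} (s : Finset α) : ∀ (f : α → ℝ),
    (∀ a ∈ s, ∃ n : ℤ, f a = n) → ∃ n : ℤ, ∑ a ∈ s, f a = n := by
  classical
  induction s using Finset.cons_induction with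
  | empty => intro f _; exact ⟨0, by simp⟩
  | cons a s ha ih =>
    intro f h
    obtain ⟨n, hn⟩ := h a (Finset.mem_cons_self _ _)
    obtain ⟨m, hm⟩ := ih f (fun b hb => h b (Finset.mem_cons_of_mem hb))
    exact ⟨n + m, by rw [Finset.sum_cons, hn, hm]; push_cast; ring⟩

lemma keyL [DecidableEq V] :
    ∀ n : ℕ, ∀ (F : Finset (Sym2 V)) (T : Finset V) (ξ : Sym2 V → ℝ),
      F.card + T.card ≤ n →
      (∀ e ∈ F, ¬ e.IsDiag) →
      (∀ d : Sym2 V → ℝ, (∀ e, e ∉ F → d e = 0) →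
        (∀ v ∈ T, ∑ e ∈ F.filter (fun e => v ∈ e), d e = 0) → ∀ e, d e = 0) →
      (∀ v ∈ T, ∃ m : ℤ, ∑ e ∈ F.filter (fun e => v ∈ e), ξ e = m) →
      ∀ e ∈ F, ∃ m : ℤ, 2 * ξ e = m := by
  intro n
  induction n with
  | zero =>
    intro F T ξ hcard _ _ _ e he
    have hF0 : F = ∅ := Finset.card_eq_zero.mp (by omega)
    simp [hF0] at he
  | succ n IH =>
    intro F T ξ hcard hF hker hint
    by_cases h0 : ∃ v ∈ T, (F.filter (fun e => v ∈ e)).card = 0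
    · obtain ⟨v, hvT, hv0⟩ := h0
      have hfe : F.filter (fun e => v ∈ e) = ∅ := Finset.card_eq_zero.mp hv0
      refine IH F (T.erase v) ξ ?_ hF ?_ ?_
      · have := Finset.card_erase_of_mem hvT
        have := Finset.card_pos.mpr ⟨v, hvT⟩
        omega
      · intro d hd hsum
        refine hker d hd ?_
        intro w hw
        by_cases hwv : w = v
        · subst hwv; rw [hfe]; simp
        · exact hsum w (Finset.mem_erase.mpr ⟨hwv, hw⟩)
      · intro w hw; exact hint w (Finset.mem_of_mem_erase hw)
    by_cases h1 : ∃ v ∈ T, (F.filter (fun e => v ∈ e)).card = 1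
    · obtain ⟨v, hvT, hv1⟩ := h1
      obtain ⟨e0, hfe⟩ := Finset.card_eq_one.mp hv1
      have he0 : e0 ∈ F ∧ v ∈ e0 := by
        have : e0 ∈ F.filter (fun e => v ∈ e) := by rw [hfe]; simp
        exact Finset.mem_filter.mp this
      obtain ⟨m0, hm0⟩ := hint v hvT
      rw [hfe, Finset.sum_singleton] at hm0
      have hsub : ∀ w : V, (F.erase e0).filter (fun e => w ∈ e) ⊆ F.filter (fun e => w ∈ e) :=
        fun w => Finset.filter_subset_filter _ (Finset.erase_subset _ _)
      have hmain : ∀ e ∈ F.erase e0, ∃ m : ℤ, 2 * ξ e = m := by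
        refine IH (F.erase e0) T ξ ?_ ?_ ?_ ?_
        · have := Finset.card_erase_of_mem he0.1
          have := Finset.card_pos.mpr ⟨e0, he0.1⟩
          omega
        · intro e he; exact hF e (Finset.mem_of_mem_erase he)
        · intro d hd hsum
          have hde0 : d e0 = 0 := hd e0 (Finset.notMem_erase _ _)
          refine hker d ?_ ?_
          · intro e he
            exact hd e (fun hc => he (Finset.mem_of_mem_erase hc))
          · intro w hw
            rw [← hsum w hw]
            refine (Finset.sum_subset (hsub w) ?_).symm
            intro e heF heE
            have heF' := Finset.mem_filter.mp heF
            by_cases hee : e = e0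
            · subst hee; exact hde0
            · exact absurd (Finset.mem_filter.mpr
                ⟨Finset.mem_erase.mpr ⟨hee, heF'.1⟩, heF'.2⟩) heE
        · intro w hw
          obtain ⟨m, hm⟩ := hint w hw
          by_cases hwe : w ∈ e0
          · refine ⟨m - m0, ?_⟩
            have hins : F.filter (fun e => w ∈ e)
                = insert e0 ((F.erase e0).filter (fun e => w ∈ e)) := by
              ext e
              simp only [Finset.mem_filter, Finset.mem_insert, Finset.mem_erase]
              constructor
              · rintro ⟨heF, hwe'⟩
                by_cases hee : e = e0
                · exact Or.inl hee
                · exact Or.inr ⟨⟨hee, heF⟩, hwe'⟩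
              · rintro (rfl | ⟨⟨_, heF⟩, hwe'⟩)
                · exact ⟨he0.1, hwe⟩
                · exact ⟨heF, hwe'⟩
            rw [hins] at hm
            rw [Finset.sum_insert (by simp)] at hm
            push_cast
            linarith
          · refine ⟨m, ?_⟩
            rw [← hm]
            refine Finset.sum_subset (hsub w) ?_
            intro e heF heE
            have heF' := Finset.mem_filter.mp heF
            by_cases hee : e = e0
            · subst hee; exact absurd heF'.2 hwe
            · exact absurd (Finset.mem_filter.mpr
                ⟨Finset.mem_erase.mpr ⟨hee, heF'.1⟩, heF'.2⟩) heE
      intro e he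
      by_cases hee : e = e0
      · subst hee; exact ⟨2 * m0, by rw [hm0]; push_cast; ring⟩
      · exact hmain e (Finset.mem_erase.mpr ⟨hee, he⟩)
    -- now every vertex of T has degree ≥ 2
    push_neg at h0 h1
    have hge2 : ∀ v ∈ T, 2 ≤ (F.filter (fun e => v ∈ e)).card := by
      intro v hv
      have := h0 v hv; have := h1 v hv; omega
    -- card F ≤ card T via injectivity
    have hcardFT : F.card ≤ T.card := by
      set M : Matrix {v // v ∈ T} {e // e ∈ F} ℝ :=
        fun v e => if v.1 ∈ e.1 then 1 else 0 with hM
      have hinj : Function.Injective M.mulVecLin := by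
        rw [injective_iff_map_eq_zero]
        intro d hd0
        have hDzero : ∀ e, (fun e => if h : e ∈ F then d ⟨e, h⟩ else 0) e = 0 := by
          refine hker _ ?_ ?_
          · intro e he; simp [he]
          · intro v hv
            have hmv : M.mulVecLin d ⟨v, hv⟩ = 0 := by rw [hd0]; rfl
            rw [Matrix.mulVecLin_apply] at hmv
            have hexp : M.mulVec d ⟨v, hv⟩
                = ∑ e : {e // e ∈ F}, (if v ∈ e.1 then d e else 0) := by
              simp [Matrix.mulVec, dotProduct, hM, ite_mul]
            rw [hexp] at hmv
            have hgoal : ∑ e ∈ F.filter (fun e => v ∈ e),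
                (fun e => if h : e ∈ F then d ⟨e, h⟩ else 0) e
                = ∑ e : {e // e ∈ F}, (if v ∈ e.1 then d e else 0) := by
              rw [Finset.sum_filter,
                ← Finset.sum_attach F (fun e => if v ∈ e then
                  (if h : e ∈ F then d ⟨e, h⟩ else 0) else 0),
                Finset.attach_eq_univ]
              exact Finset.sum_congr rfl (fun e _ => by simp [e.2])
            exact hgoal.trans hmv
        funext e
        have := hDzero e.1
        simpa [e.2] using this
      have hrk := LinearMap.finrank_le_finrank_of_injective hinj
      simpa [Module.finrank_fintype_fun_eq_card, Fintype.card_coe] using hrk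
    -- double counting
    have hdc : ∑ v ∈ T, (F.filter (fun e => v ∈ e)).card
        = ∑ e ∈ F, (T.filter (fun v => v ∈ e)).card := by
      simp_rw [Finset.card_filter]
      rw [Finset.sum_comm]
    have hedge : ∀ e ∈ F, (T.filter (fun v => v ∈ e)).card ≤ 2 := by
      intro e _
      induction e using Sym2.ind with
      | _ a b =>
        have hsub : T.filter (fun v => v ∈ s(a, b)) ⊆ {a, b} := by
          intro v hv
          rcases Sym2.mem_iff.mp (Finset.mem_filter.mp hv).2 with h | h <;> simp [h]
        calc (T.filter (fun v => v ∈ s(a, b))).card ≤ ({a, b} : Finset V).card :=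
              Finset.card_le_card hsub
          _ ≤ 2 := by
              refine le_trans (Finset.card_insert_le _ _) ?_
              simp
    have hdeg2 : ∀ v ∈ T, (F.filter (fun e => v ∈ e)).card = 2 := by
      by_contra hcon
      push_neg at hcon
      obtain ⟨v0, hv0T, hv0⟩ := hcon
      have hlt : ∑ v ∈ T, 2 < ∑ v ∈ T, (F.filter (fun e => v ∈ e)).card :=
        Finset.sum_lt_sum (fun v hv => hge2 v hv)
          ⟨v0, hv0T, lt_of_le_of_ne (hge2 v0 hv0T) (Ne.symm hv0)⟩
      have hle : ∑ e ∈ F, (T.filter (fun v => v ∈ e)).card ≤ ∑ e ∈ F, 2 :=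
        Finset.sum_le_sum hedge
      rw [Finset.sum_const, smul_eq_mul] at hlt hle
      rw [hdc] at hlt
      omega
    -- the parity kernel vector
    set d : Sym2 V → ℝ := fun e =>
      if e ∈ F ∧ Int.fract (ξ e) ≠ 0 then Int.fract (ξ e) - 1/2 else 0 with hd
    have hdval : ∀ e, d e
        = if e ∈ F ∧ Int.fract (ξ e) ≠ 0 then Int.fract (ξ e) - 1/2 else 0 :=
      fun e => rfl
    have hdzero : ∀ e, d e = 0 := by
      refine hker d ?_ ?_
      · intro e he
        rw [hdval e, if_neg]
        intro hc
        exact he hc.1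
      · intro v hv
        obtain ⟨e1, e2, hne, hpair⟩ := Finset.card_eq_two.mp (hdeg2 v hv)
        obtain ⟨m, hm⟩ := hint v hv
        have he1m : e1 ∈ F.filter (fun e => v ∈ e) := by
          rw [hpair]; exact Finset.mem_insert_self _ _
        have he2m : e2 ∈ F.filter (fun e => v ∈ e) := by rw [hpair]; simp
        have he1 := Finset.mem_filter.mp he1m
        have he2 := Finset.mem_filter.mp he2m
        rw [hpair, Finset.sum_pair hne] at hm ⊢
        rw [hdval e1, hdval e2]
        have hfl1 := Int.floor_add_fract (ξ e1)
        have hfl2 := Int.floor_add_fract (ξ e2)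
        have hk : Int.fract (ξ e1) + Int.fract (ξ e2)
            = ((m - ⌊ξ e1⌋ - ⌊ξ e2⌋ : ℤ) : ℝ) := by push_cast; linarith
        have hb1 : 0 ≤ Int.fract (ξ e1) := Int.fract_nonneg _
        have hb2 : 0 ≤ Int.fract (ξ e2) := Int.fract_nonneg _
        have hu1 : Int.fract (ξ e1) < 1 := Int.fract_lt_one _
        have hu2 : Int.fract (ξ e2) < 1 := Int.fract_lt_one _
        have hk01 : (m - ⌊ξ e1⌋ - ⌊ξ e2⌋ : ℤ) = 0 ∨ (m - ⌊ξ e1⌋ - ⌊ξ e2⌋ : ℤ) = 1 := by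
          have h0' : (0:ℝ) ≤ ((m - ⌊ξ e1⌋ - ⌊ξ e2⌋ : ℤ) : ℝ) := by rw [← hk]; linarith
          have h2' : ((m - ⌊ξ e1⌋ - ⌊ξ e2⌋ : ℤ) : ℝ) < 2 := by rw [← hk]; linarith
          have h0'' : (0:ℤ) ≤ m - ⌊ξ e1⌋ - ⌊ξ e2⌋ := by exact_mod_cast h0'
          have h2'' : (m - ⌊ξ e1⌋ - ⌊ξ e2⌋ : ℤ) < 2 := by exact_mod_cast h2'
          omega
        rcases hk01 with hk0 | hk1
        · have hsum0 : Int.fract (ξ e1) + Int.fract (ξ e2) = 0 := by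
            rw [hk, hk0]; simp
          have hf10 : Int.fract (ξ e1) = 0 := by linarith
          have hf20 : Int.fract (ξ e2) = 0 := by linarith
          rw [if_neg (by simp [hf10]), if_neg (by simp [hf20])]
          ring
        · have hsum1 : Int.fract (ξ e1) + Int.fract (ξ e2) = 1 := by
            rw [hk, hk1]; simp
          have hf1ne : Int.fract (ξ e1) ≠ 0 := by
            intro h; rw [h] at hsum1; linarith
          have hf2ne : Int.fract (ξ e2) ≠ 0 := by
            intro h; rw [h] at hsum1; linarith
          rw [if_pos ⟨he1.1, hf1ne⟩, if_pos ⟨he2.1, hf2ne⟩]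
          linarith
    intro e he
    have hde := hdzero e
    rw [hdval e] at hde
    by_cases hf : Int.fract (ξ e) = 0
    · refine ⟨2 * ⌊ξ e⌋, ?_⟩
      have := Int.floor_add_fract (ξ e)
      rw [hf] at this
      push_cast
      linarith
    · rw [if_pos ⟨he, hf⟩] at hde
      refine ⟨2 * ⌊ξ e⌋ + 1, ?_⟩
      have := Int.floor_add_fract (ξ e)
      push_cast
      linarith

/-- The fractional `b`-matching polytope of any finite simple graph is half-integral:
every extreme point has all coordinates in `{0, 1/2, 1}`. -/
theorem bMatching_polytope_half_integral [Fintype V]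
    (G : SimpleGraph V) (b : V → ℕ) :
    ∀ x ∈ Set.extremePoints ℝ {x : Sym2 V → ℝ | InBMatchingPolytope G b x},
      ∀ e : Sym2 V, x e = 0 ∨ x e = 1 / 2 ∨ x e = 1 := by
  classical
  intro x hx
  obtain ⟨hxS, hext⟩ := hx
  obtain ⟨hbd, hzero, hvtx⟩ := (hxS : InBMatchingPolytope G b x)
  set F : Finset (Sym2 V) := G.edgeFinset.filter (fun e => 0 < x e ∧ x e < 1) with hFdef
  set T : Finset V := Finset.univ.filter
    (fun v => ∑ e ∈ G.edgeFinset.filter (fun e => v ∈ e), x e = (b v : ℝ)) with hTdef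
  have hFsub : F ⊆ G.edgeFinset := by rw [hFdef]; exact Finset.filter_subset _ _
  -- the kernel property coming from extremality
  have hker : ∀ d : Sym2 V → ℝ, (∀ e, e ∉ F → d e = 0) →
      (∀ v ∈ T, ∑ e ∈ F.filter (fun e => v ∈ e), d e = 0) → ∀ e, d e = 0 := by
    intro d hsupp hsums
    by_contra hcon
    push_neg at hcon
    obtain ⟨e0, he0⟩ := hcon
    have he0F : e0 ∈ F := by
      by_contra h; exact he0 (hsupp e0 h)
    have hsum_eq : ∀ v : V, ∑ e ∈ G.edgeFinset.filter (fun e => v ∈ e), d e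
        = ∑ e ∈ F.filter (fun e => v ∈ e), d e := by
      intro v
      refine (Finset.sum_subset (Finset.filter_subset_filter _ hFsub) ?_).symm
      intro e heA heF
      obtain ⟨heE, hve⟩ := Finset.mem_filter.mp heA
      refine hsupp e ?_
      intro hc
      exact heF (Finset.mem_filter.mpr ⟨hc, hve⟩)
    -- epsilon
    set c1 : Sym2 V → ℝ := fun e => min (x e) (1 - x e) / (|d e| + 1) with hc1
    set c2 : V → ℝ := fun v =>
      ((b v : ℝ) - ∑ e ∈ G.edgeFinset.filter (fun e => v ∈ e), x e)
        / (|∑ e ∈ G.edgeFinset.filter (fun e => v ∈ e), d e| + 1) with hc2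
    set Q : Finset ℝ := insert 1 (F.image c1 ∪ (Finset.univ \ T).image c2) with hQ
    have hQne : Q.Nonempty := ⟨1, by rw [hQ]; exact Finset.mem_insert_self _ _⟩
    set ε : ℝ := Q.min' hQne with hε
    have hεpos : 0 < ε := by
      have hall : ∀ r ∈ Q, 0 < r := by
        intro r hr
        rw [hQ, Finset.mem_insert, Finset.mem_union] at hr
        rcases hr with rfl | hr | hr
        · norm_num
        · obtain ⟨e, heF, rfl⟩ := Finset.mem_image.mp hr
          obtain ⟨h1, h2⟩ := (Finset.mem_filter.mp heF).2
          refine div_pos (lt_min h1 (by linarith)) ?_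
          positivity
        · obtain ⟨v, hvT, rfl⟩ := Finset.mem_image.mp hr
          have hvT' : v ∉ T := (Finset.mem_sdiff.mp hvT).2
          have hne : ∑ e ∈ G.edgeFinset.filter (fun e => v ∈ e), x e ≠ (b v : ℝ) := by
            intro h
            exact hvT' (Finset.mem_filter.mpr ⟨Finset.mem_univ _, h⟩)
          have hlt : ∑ e ∈ G.edgeFinset.filter (fun e => v ∈ e), x e < (b v : ℝ) :=
            lt_of_le_of_ne (hvtx v) hne
          refine div_pos (by linarith) ?_
          positivity
      exact hall ε (Q.min'_mem hQne)
    have hεle1 : ε ≤ 1 := Q.min'_le 1 (by rw [hQ]; exact Finset.mem_insert_self _ _)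
    have hbndE : ∀ e ∈ F, ε * |d e| ≤ min (x e) (1 - x e) := by
      intro e heF
      have hmem : c1 e ∈ Q := by
        rw [hQ, Finset.mem_insert, Finset.mem_union]
        exact Or.inr (Or.inl (Finset.mem_image_of_mem _ heF))
      have h1 : ε ≤ c1 e := Q.min'_le _ hmem
      have hden : (0:ℝ) < |d e| + 1 := by positivity
      have h2 : ε * (|d e| + 1) ≤ min (x e) (1 - x e) := by
        rw [hc1] at h1
        calc ε * (|d e| + 1) ≤ (min (x e) (1 - x e) / (|d e| + 1)) * (|d e| + 1) := by
              exact mul_le_mul_of_nonneg_right h1 (le_of_lt hden)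
          _ = min (x e) (1 - x e) := div_mul_cancel₀ _ (ne_of_gt hden)
      nlinarith [abs_nonneg (d e), hεpos]
    have hbndV : ∀ v : V, v ∉ T →
        ε * |∑ e ∈ G.edgeFinset.filter (fun e => v ∈ e), d e|
          ≤ (b v : ℝ) - ∑ e ∈ G.edgeFinset.filter (fun e => v ∈ e), x e := by
      intro v hvT
      have hmem : c2 v ∈ Q := by
        rw [hQ, Finset.mem_insert, Finset.mem_union]
        exact Or.inr (Or.inr (Finset.mem_image_of_mem _
          (Finset.mem_sdiff.mpr ⟨Finset.mem_univ _, hvT⟩)))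
      have h1 : ε ≤ c2 v := Q.min'_le _ hmem
      have hden : (0:ℝ) < |∑ e ∈ G.edgeFinset.filter (fun e => v ∈ e), d e| + 1 := by
        positivity
      have h2 : ε * (|∑ e ∈ G.edgeFinset.filter (fun e => v ∈ e), d e| + 1)
          ≤ (b v : ℝ) - ∑ e ∈ G.edgeFinset.filter (fun e => v ∈ e), x e := by
        rw [hc2] at h1
        calc ε * (|∑ e ∈ G.edgeFinset.filter (fun e => v ∈ e), d e| + 1)
            ≤ (((b v : ℝ) - ∑ e ∈ G.edgeFinset.filter (fun e => v ∈ e), x e)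
                / (|∑ e ∈ G.edgeFinset.filter (fun e => v ∈ e), d e| + 1))
              * (|∑ e ∈ G.edgeFinset.filter (fun e => v ∈ e), d e| + 1) :=
              mul_le_mul_of_nonneg_right h1 (le_of_lt hden)
          _ = _ := div_mul_cancel₀ _ (ne_of_gt hden)
      nlinarith [abs_nonneg (∑ e ∈ G.edgeFinset.filter (fun e => v ∈ e), d e), hεpos]
    -- membership of the perturbed points
    have hmem : ∀ s : ℝ, |s| ≤ 1 →
        InBMatchingPolytope G b (fun e => x e + s * ε * d e) := by
      intro s hs
      refine ⟨?_, ?_, ?_⟩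
      · intro e
        by_cases heF : e ∈ F
        · obtain ⟨h1, h2⟩ := (Finset.mem_filter.mp heF).2
          have hb := hbndE e heF
          have habs : |s * ε * d e| ≤ ε * |d e| := by
            rw [abs_mul, abs_mul, abs_of_pos hεpos]
            have : |s| * ε ≤ 1 * ε := mul_le_mul_of_nonneg_right hs (le_of_lt hεpos)
            nlinarith [abs_nonneg (d e), abs_nonneg s]
          have hmin1 : min (x e) (1 - x e) ≤ x e := min_le_left _ _
          have hmin2 : min (x e) (1 - x e) ≤ 1 - x e := min_le_right _ _
          have hnl := neg_abs_le (s * ε * d e)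
          have hnu := le_abs_self (s * ε * d e)
          constructor
          · simp only []
            linarith
          · simp only []
            linarith
        · have hd0 : d e = 0 := hsupp e heF
          simp only [hd0, mul_zero, add_zero]
          exact hbd e
      · intro e heE
        have heF : e ∉ F := by
          intro hc
          exact heE (SimpleGraph.mem_edgeFinset.mp (hFsub hc))
        have hd0 : d e = 0 := hsupp e heF
        simp only [hd0, mul_zero, add_zero]
        exact hzero e heE
      · intro v
        have hsplit : ∑ e ∈ G.edgeFinset.filter (fun e => v ∈ e), (x e + s * ε * d e)
            = (∑ e ∈ G.edgeFinset.filter (fun e => v ∈ e), x e)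
              + s * ε * ∑ e ∈ G.edgeFinset.filter (fun e => v ∈ e), d e := by
          rw [Finset.sum_add_distrib, Finset.mul_sum]
        rw [hsplit]
        by_cases hvT : v ∈ T
        · have h0 : ∑ e ∈ G.edgeFinset.filter (fun e => v ∈ e), d e = 0 := by
            rw [hsum_eq v]; exact hsums v hvT
          have hvb : ∑ e ∈ G.edgeFinset.filter (fun e => v ∈ e), x e = (b v : ℝ) :=
            (Finset.mem_filter.mp hvT).2
          rw [h0, mul_zero, add_zero, hvb]
        · have hb := hbndV v hvT
          have habs : |s * ε * ∑ e ∈ G.edgeFinset.filter (fun e => v ∈ e), d e|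
              ≤ ε * |∑ e ∈ G.edgeFinset.filter (fun e => v ∈ e), d e| := by
            rw [abs_mul, abs_mul, abs_of_pos hεpos]
            have : |s| * ε ≤ 1 * ε := mul_le_mul_of_nonneg_right hs (le_of_lt hεpos)
            nlinarith [abs_nonneg (∑ e ∈ G.edgeFinset.filter (fun e => v ∈ e), d e),
              abs_nonneg s]
          have hnu := le_abs_self (s * ε * ∑ e ∈ G.edgeFinset.filter (fun e => v ∈ e), d e)
          linarith
    have hy := hmem 1 (by norm_num)
    have hz := hmem (-1) (by norm_num)
    have hopen : x ∈ openSegment ℝ (fun e => x e + 1 * ε * d e)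
        (fun e => x e + (-1) * ε * d e) := by
      refine ⟨1/2, 1/2, by norm_num, by norm_num, by norm_num, ?_⟩
      funext e
      simp only [Pi.add_apply, Pi.smul_apply, smul_eq_mul]
      ring
    have heq := hext hy hz hopen
    have := congrFun heq e0
    simp only [one_mul] at this
    have : ε * d e0 = 0 := by linarith [this]
    rcases mul_eq_zero.mp this with h | h
    · exact absurd h (ne_of_gt hεpos)
    · exact he0 h
  -- integrality of tight vertex sums over F
  have hint : ∀ v ∈ T, ∃ m : ℤ, ∑ e ∈ F.filter (fun e => v ∈ e), x e = m := by
    intro v hv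
    have hvb : ∑ e ∈ G.edgeFinset.filter (fun e => v ∈ e), x e = (b v : ℝ) :=
      (Finset.mem_filter.mp hv).2
    set A := G.edgeFinset.filter (fun e => v ∈ e) with hA
    have hsplit : ∑ e ∈ A.filter (fun e => 0 < x e ∧ x e < 1), x e
        + ∑ e ∈ A.filter (fun e => ¬(0 < x e ∧ x e < 1)), x e = (b v : ℝ) := by
      rw [Finset.sum_filter_add_sum_filter_not]; exact hvb
    have hAe : A.filter (fun e => 0 < x e ∧ x e < 1) = F.filter (fun e => v ∈ e) := by
      ext e
      simp only [hA, hFdef, Finset.mem_filter]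
      tauto
    have hintpiece : ∀ e ∈ A.filter (fun e => ¬(0 < x e ∧ x e < 1)), ∃ n : ℤ, x e = n := by
      intro e he
      have hb := hbd e
      have hn := (Finset.mem_filter.mp he).2
      push_neg at hn
      by_cases h01 : x e ≤ 0
      · exact ⟨0, by push_cast; linarith [hb.1]⟩
      · push_neg at h01
        have := hn h01
        exact ⟨1, by push_cast; linarith [hb.2]⟩
    obtain ⟨m, hm⟩ := sumIsInt (A.filter (fun e => ¬(0 < x e ∧ x e < 1))) x hintpiece
    refine ⟨(b v : ℤ) - m, ?_⟩
    rw [← hAe]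
    push_cast
    linarith
  have hFdiag : ∀ e ∈ F, ¬ e.IsDiag := by
    intro e he
    exact SimpleGraph.not_isDiag_of_mem_edgeSet G (SimpleGraph.mem_edgeFinset.mp (hFsub he))
  have hhalf := keyL (F.card + T.card) F T x le_rfl hFdiag hker hint
  intro e
  by_cases heF : e ∈ F
  · obtain ⟨m, hm⟩ := hhalf e heF
    obtain ⟨h1, h2⟩ := (Finset.mem_filter.mp heF).2
    have hm0 : (0:ℝ) < (m:ℝ) := by linarith
    have hm2 : (m:ℝ) < 2 := by linarith
    have hm0' : (0:ℤ) < m := by exact_mod_cast hm0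
    have hm2' : (m:ℤ) < 2 := by exact_mod_cast hm2
    have : m = 1 := by omega
    subst this
    right; left
    push_cast at hm
    linarith
  · by_cases heE : e ∈ G.edgeFinset
    · have hnot : ¬(0 < x e ∧ x e < 1) := by
        intro hc
        exact heF (Finset.mem_filter.mpr ⟨heE, hc⟩)
      push_neg at hnot
      have hb := hbd e
      by_cases h01 : x e ≤ 0
      · left; linarith [hb.1]
      · push_neg at h01
        right; right
        linarith [hnot h01, hb.2]
    · left
      exact hzero e (fun hc => heE (SimpleGraph.mem_edgeFinset.mpr hc))
end

section
/- Let G be a finite bipartite graph and b: V → ℕ. Then the maximum value of a fractional b-matching equals the maximum size of an integral b-matching, i.e., the integrality gap of the bipartite b-matching polytope is 1. -/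
open Finset
open scoped Classical

variable {V : Type*}

/-- A fractional `b`-matching of `G`. -/
def IsFracBMatching [Fintype V] (G : SimpleGraph V) (b : V → ℕ)
    (x : Sym2 V → ℝ) : Prop :=
  (∀ e, 0 ≤ x e ∧ x e ≤ 1) ∧ (∀ e ∉ G.edgeSet, x e = 0) ∧
  ∀ v : V, ∑ e ∈ G.edgeFinset.filter (fun e => v ∈ e), x e ≤ (b v : ℝ)

/-- An integral `b`-matching of `G`. -/
def IsBMatching (G : SimpleGraph V) (b : V → ℕ) (M : Finset (Sym2 V)) : Prop :=
  (↑M : Set (Sym2 V)) ⊆ G.edgeSet ∧ ∀ v : V, (M.filter (fun e => v ∈ e)).card ≤ b v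

namespace BMatchAux

variable {V : Type*} [Fintype V] {G : SimpleGraph V} {b : V → ℕ} {x : Sym2 V → ℝ}

noncomputable def fracset (G : SimpleGraph V) (x : Sym2 V → ℝ) : Finset (Sym2 V) :=
  G.edgeFinset.filter (fun e => x e ≠ 0 ∧ x e ≠ 1)
lemma slack_lemma (hx : IsFracBMatching G b x) (v : V) (e0 : Sym2 V)
    (he0 : e0 ∈ G.edgeFinset) (hv : v ∈ e0) (h0 : 0 < x e0)
    (honly : ∀ e ∈ G.edgeFinset, v ∈ e → e ≠ e0 → x e = 0 ∨ x e = 1)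
    (ε : ℝ) (hε : ε ≤ 1 - x e0) :
    (∑ e ∈ G.edgeFinset.filter (fun e => v ∈ e), x e) + ε ≤ (b v : ℝ) := by
  set D := G.edgeFinset.filter (fun e => v ∈ e) with hD
  have he0D : e0 ∈ D := by simp [hD, he0, hv]
  set R := D.erase e0 with hR
  have hsplit : ∑ e ∈ R, x e + x e0 = ∑ e ∈ D, x e := Finset.sum_erase_add D x he0D
  have hRvals : ∀ e ∈ R, x e = 0 ∨ x e = 1 := by
    intro e he
    have h1 := Finset.mem_of_mem_erase he
    rw [hD, Finset.mem_filter] at h1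
    exact honly e h1.1 h1.2 (Finset.ne_of_mem_erase he)
  have hcard : ∑ e ∈ R, x e = ((R.filter (fun e => x e = 1)).card : ℝ) := by
    rw [← Finset.sum_filter_add_sum_filter_not R (fun e => x e = 1) x]
    have h1 : ∑ e ∈ R.filter (fun e => x e = 1), x e
        = ((R.filter (fun e => x e = 1)).card : ℝ) := by
      rw [Finset.sum_congr rfl (fun e he => (Finset.mem_filter.mp he).2)]
      simp
    have h2 : ∑ e ∈ R.filter (fun e => ¬ x e = 1), x e = 0 := by
      apply Finset.sum_eq_zero
      intro e he
      rcases Finset.mem_filter.mp he with ⟨heR, hne1⟩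
      rcases hRvals e heR with h | h
      · exact h
      · exact absurd h hne1
    rw [h1, h2, add_zero]
  set m := (R.filter (fun e => x e = 1)).card with hm
  have hDb : ∑ e ∈ D, x e ≤ (b v : ℝ) := hx.2.2 v
  have hmb : (m : ℝ) + x e0 ≤ (b v : ℝ) := by
    rw [← hcard, hsplit]; exact hDb
  have hmlt : (m : ℝ) < (b v : ℝ) := by linarith
  have hmnat : m < b v := by exact_mod_cast hmlt
  have hm1 : (m : ℝ) + 1 ≤ (b v : ℝ) := by exact_mod_cast hmnat
  have : ∑ e ∈ D, x e = (m : ℝ) + x e0 := by rw [← hcard, ← hsplit]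
  rw [this]; linarith

lemma core (hx : IsFracBMatching G b x)
    (m : ℕ) (hm : 1 ≤ m) (q : ℕ → Sym2 V)
    (hinj : ∀ i < m, ∀ j < m, q i = q j → i = j)
    (hmem : ∀ i < m, q i ∈ G.edgeFinset)
    (hfr : ∀ i < m, x (q i) ≠ 0 ∧ x (q i) ≠ 1)
    (σ : ℕ → ℝ) (hσ : ∀ i < m, σ i = 1 ∨ σ i = -1)
    (hval : 0 ≤ ∑ i ∈ Finset.range m, σ i)
    (hvert : ∀ v : V, (∑ i ∈ (Finset.range m).filter (fun i => v ∈ q i), σ i ≤ 0) ∨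
      (∃ i0, i0 < m ∧ v ∈ q i0 ∧ σ i0 = 1 ∧
        (∑ i ∈ (Finset.range m).filter (fun i => v ∈ q i), σ i) = 1 ∧
        ∀ e ∈ G.edgeFinset, v ∈ e → e ≠ q i0 → x e = 0 ∨ x e = 1)) :
    ∃ x' : Sym2 V → ℝ, IsFracBMatching G b x' ∧
      ∑ e ∈ G.edgeFinset, x e ≤ ∑ e ∈ G.edgeFinset, x' e ∧
      (fracset G x').card < (fracset G x).card := by
  -- fractional bounds
  have hfrb : ∀ i < m, 0 < x (q i) ∧ x (q i) < 1 := by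
    intro i hi
    have h1 := (hx.1 (q i)).1
    have h2 := (hx.1 (q i)).2
    have h3 := hfr i hi
    constructor
    · exact lt_of_le_of_ne h1 (Ne.symm h3.1)
    · exact lt_of_le_of_ne h2 h3.2
  -- epsilon
  set t : ℕ → ℝ := fun i => if σ i = 1 then 1 - x (q i) else x (q i) with ht
  obtain ⟨i0, hi0mem, hi0min⟩ := Finset.exists_min_image (Finset.range m) t
    (Finset.nonempty_range_iff.mpr (by omega))
  have hi0 : i0 < m := Finset.mem_range.mp hi0mem
  set ε := t i0 with hε
  have hεdef : ε = if σ i0 = 1 then 1 - x (q i0) else x (q i0) := rfl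
  have hεpos : 0 < ε := by
    rw [hεdef]
    rcases hσ i0 hi0 with h | h
    · rw [if_pos h]; linarith [(hfrb i0 hi0).2]
    · have hne : ¬ (σ i0 = 1) := by rw [h]; norm_num
      rw [if_neg hne]; exact (hfrb i0 hi0).1
  have hεle1 : ∀ j < m, σ j = 1 → ε ≤ 1 - x (q j) := by
    intro j hj hs
    have := hi0min j (Finset.mem_range.mpr hj)
    simpa [ht, hs] using this
  have hεle2 : ∀ j < m, σ j = -1 → ε ≤ x (q j) := by
    intro j hj hs
    have := hi0min j (Finset.mem_range.mpr hj)
    have hne : ¬ (σ j = 1) := by rw [hs]; norm_num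
    simpa [ht, hne] using this
  -- perturbation
  set d : Sym2 V → ℝ := fun e => ∑ i ∈ Finset.range m, if e = q i then σ i * ε else 0 with hd
  set x' : Sym2 V → ℝ := fun e => x e + d e with hx'
  -- sum over any finset
  have hsumd : ∀ S : Finset (Sym2 V), ∑ e ∈ S, d e
      = ∑ i ∈ (Finset.range m).filter (fun i => q i ∈ S), σ i * ε := by
    intro S
    rw [hd]
    rw [Finset.sum_comm]
    rw [Finset.sum_filter]
    apply Finset.sum_congr rfl
    intro i _
    exact Finset.sum_ite_eq' S (q i) (fun _ => σ i * ε)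
  have hdq : ∀ j < m, d (q j) = σ j * ε := by
    intro j hj
    have hdef : d (q j) = ∑ i ∈ Finset.range m, if q j = q i then σ i * ε else 0 := rfl
    rw [hdef]
    rw [Finset.sum_eq_single_of_mem j (Finset.mem_range.mpr hj)]
    · simp
    · intro i hi hne
      have hi' := Finset.mem_range.mp hi
      have : ¬ (q j = q i) := fun h => hne (hinj i hi' j hj h.symm)
      simp [this]
  have hdnot : ∀ e, (¬ ∃ i, i < m ∧ e = q i) → d e = 0 := by
    intro e he
    have hdef : d e = ∑ i ∈ Finset.range m, if e = q i then σ i * ε else 0 := rfl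
    rw [hdef]
    apply Finset.sum_eq_zero
    intro i hi
    have : ¬ (e = q i) := fun h => he ⟨i, Finset.mem_range.mp hi, h⟩
    simp [this]
  -- bounds
  have hbounds : ∀ e, 0 ≤ x' e ∧ x' e ≤ 1 := by
    intro e
    by_cases h : ∃ i, i < m ∧ e = q i
    · obtain ⟨j, hj, rfl⟩ := h
      have hdj := hdq j hj
      rcases hσ j hj with hs | hs
      · constructor
        · simp only [hx']; rw [hdj, hs]; nlinarith [(hfrb j hj).1]
        · simp only [hx']; rw [hdj, hs]; have := hεle1 j hj hs; linarith
      · constructor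
        · simp only [hx']; rw [hdj, hs]; have := hεle2 j hj hs; linarith
        · simp only [hx']; rw [hdj, hs]; nlinarith [(hfrb j hj).2]
    · simp only [hx']; rw [hdnot e h, add_zero]; exact hx.1 e
  -- zero off edges
  have hzero : ∀ e ∉ G.edgeSet, x' e = 0 := by
    intro e he
    have h : ¬ ∃ i, i < m ∧ e = q i := by
      rintro ⟨i, hi, rfl⟩
      exact he (SimpleGraph.mem_edgeFinset.mp (hmem i hi))
    simp only [hx']; rw [hdnot e h, add_zero]; exact hx.2.1 e he
  -- vertex constraints
  have hvtx : ∀ v : V, ∑ e ∈ G.edgeFinset.filter (fun e => v ∈ e), x' e ≤ (b v : ℝ) := by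
    intro v
    set D := G.edgeFinset.filter (fun e => v ∈ e) with hD
    have hsplit : ∑ e ∈ D, x' e = ∑ e ∈ D, x e + ∑ e ∈ D, d e := by
      simp only [hx']; rw [Finset.sum_add_distrib]
    have hfe : (Finset.range m).filter (fun i => q i ∈ D)
        = (Finset.range m).filter (fun i => v ∈ q i) := by
      apply Finset.filter_congr
      intro i hi
      have hi' := Finset.mem_range.mp hi
      simp [hD, hmem i hi']
    have hdsum : ∑ e ∈ D, d e
        = (∑ i ∈ (Finset.range m).filter (fun i => v ∈ q i), σ i) * ε := by
      rw [hsumd D, hfe, Finset.sum_mul]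
    rcases hvert v with hle | ⟨j0, hj0, hvj0, hsj0, hssum, honly⟩
    · have : ∑ e ∈ D, d e ≤ 0 := by
        rw [hdsum]
        exact mul_nonpos_of_nonpos_of_nonneg hle (le_of_lt hεpos)
      have hDb := hx.2.2 v
      rw [hsplit]; rw [hD] at *; linarith
    · have hd1 : ∑ e ∈ D, d e = ε := by rw [hdsum, hssum, one_mul]
      rw [hsplit, hd1]
      exact slack_lemma hx v (q j0) (hmem j0 hj0) hvj0 (hfrb j0 hj0).1 honly ε
        (hεle1 j0 hj0 hsj0)
  -- value
  have hvalx : ∑ e ∈ G.edgeFinset, x e ≤ ∑ e ∈ G.edgeFinset, x' e := by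
    have hsplit : ∑ e ∈ G.edgeFinset, x' e
        = ∑ e ∈ G.edgeFinset, x e + ∑ e ∈ G.edgeFinset, d e := by
      simp only [hx']; rw [Finset.sum_add_distrib]
    have hfe : (Finset.range m).filter (fun i => q i ∈ G.edgeFinset) = Finset.range m := by
      apply Finset.filter_true_of_mem
      intro i hi
      exact hmem i (Finset.mem_range.mp hi)
    have : ∑ e ∈ G.edgeFinset, d e = (∑ i ∈ Finset.range m, σ i) * ε := by
      rw [hsumd, hfe, Finset.sum_mul]
    rw [hsplit, this]
    nlinarith
  -- fracset shrinks
  have hsub : fracset G x' ⊆ fracset G x := by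
    intro e he
    rw [fracset, Finset.mem_filter] at he ⊢
    refine ⟨he.1, ?_⟩
    by_cases h : ∃ i, i < m ∧ e = q i
    · obtain ⟨j, hj, rfl⟩ := h
      exact hfr j hj
    · have : x' e = x e := by simp only [hx']; rw [hdnot e h, add_zero]
      rw [← this]; exact he.2
  have hi0frac : q i0 ∈ fracset G x := by
    rw [fracset, Finset.mem_filter]
    exact ⟨hmem i0 hi0, hfr i0 hi0⟩
  have hi0not : q i0 ∉ fracset G x' := by
    rw [fracset, Finset.mem_filter]
    rintro ⟨-, hne0, hne1⟩
    have hdi0 := hdq i0 hi0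
    rcases hσ i0 hi0 with hs | hs
    · apply hne1
      have hεeq : ε = 1 - x (q i0) := by rw [hεdef, if_pos hs]
      show x (q i0) + d (q i0) = 1
      rw [hdi0, hs, hεeq]; ring
    · apply hne0
      have hne : ¬ (σ i0 = 1) := by rw [hs]; norm_num
      have hεeq : ε = x (q i0) := by rw [hεdef, if_neg hne]
      show x (q i0) + d (q i0) = 0
      rw [hdi0, hs, hεeq]; ring
  refine ⟨x', ⟨hbounds, hzero, hvtx⟩, hvalx, ?_⟩
  exact Finset.card_lt_card ⟨hsub, fun hall => hi0not (hall hi0frac)⟩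

/-- A path of fractional edges. -/
def IsFPath (G : SimpleGraph V) [Fintype ↑G.edgeSet] (x : Sym2 V → ℝ) (p : ℕ → V) (k : ℕ) : Prop :=
  (∀ i ≤ k, ∀ j ≤ k, p i = p j → i = j) ∧
  ∀ i < k, s(p i, p (i+1)) ∈ G.edgeFinset ∧ x s(p i, p (i+1)) ≠ 0 ∧ x s(p i, p (i+1)) ≠ 1

lemma cycle_case (hx : IsFracBMatching G b x) (m : ℕ) (hm3 : 3 ≤ m) (heven : Even m)
    (w : ℕ → V) (hwinj : ∀ i < m, ∀ j < m, w i = w j → i = j)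
    (hq : ∀ i < m, s(w i, w ((i+1) % m)) ∈ G.edgeFinset ∧
      x s(w i, w ((i+1) % m)) ≠ 0 ∧ x s(w i, w ((i+1) % m)) ≠ 1) :
    ∃ x' : Sym2 V → ℝ, IsFracBMatching G b x' ∧
      ∑ e ∈ G.edgeFinset, x e ≤ ∑ e ∈ G.edgeFinset, x' e ∧
      (fracset G x').card < (fracset G x).card := by
  have hm0 : 0 < m := by omega
  have hmod : ∀ i, (i+1) % m < m := fun i => Nat.mod_lt _ hm0
  set q : ℕ → Sym2 V := fun i => s(w i, w ((i+1) % m)) with hqdef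
  have hinj : ∀ i < m, ∀ j < m, q i = q j → i = j := by
    intro i hi j hj heq
    rw [hqdef] at heq
    simp only [Sym2.eq_iff] at heq
    rcases heq with ⟨h1, _⟩ | ⟨h1, h2⟩
    · exact hwinj i hi j hj h1
    · exfalso
      have e1 : i = (j+1) % m := hwinj i hi _ (hmod j) h1
      have e2 : (i+1) % m = j := hwinj _ (hmod i) j hj h2
      have e3 : i = (i + 2) % m := by
        conv_lhs => rw [e1]
        rw [← e2, Nat.mod_add_mod]
      by_cases h : i + 2 < m
      · rw [Nat.mod_eq_of_lt h] at e3; omega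
      · have h2m : i + 2 - m < m := by omega
        rw [Nat.mod_eq_sub_mod (by omega), Nat.mod_eq_of_lt h2m] at e3
        omega
  apply core hx m (by omega) q hinj (fun i hi => (hq i hi).1) (fun i hi => (hq i hi).2)
    (fun i => (-1 : ℝ)^i)
  · intro i _
    rcases Nat.even_or_odd i with h | h
    · left; exact h.neg_one_pow
    · right; exact h.neg_one_pow
  · rw [neg_one_geom_sum, if_pos heven]
  · intro v
    left
    by_cases hv : ∃ t, t < m ∧ v = w t
    · obtain ⟨t, htm, rfl⟩ := hv
      set pr := if t = 0 then m - 1 else t - 1 with hprdef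
      have hprm : pr < m := by rw [hprdef]; split_ifs <;> omega
      have hprne : pr ≠ t := by rw [hprdef]; split_ifs with h <;> omega
      have hfilter : (Finset.range m).filter (fun i => w t ∈ q i) = {t, pr} := by
        ext i
        simp only [Finset.mem_filter, Finset.mem_range, Finset.mem_insert,
          Finset.mem_singleton, hqdef, Sym2.mem_iff]
        constructor
        · rintro ⟨him, h | h⟩
          · left; exact (hwinj t htm i him h).symm
          · right
            have ht' : t = (i+1) % m := hwinj t htm _ (hmod i) h
            by_cases hil : i + 1 < m
            · rw [Nat.mod_eq_of_lt hil] at ht'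
              rw [hprdef]
              split_ifs with h0
              · omega
              · omega
            · have : i + 1 = m := by omega
              rw [this, Nat.mod_self] at ht'
              rw [hprdef, if_pos ht']
              omega
        · rintro (rfl | rfl)
          · exact ⟨htm, Or.inl rfl⟩
          · refine ⟨hprm, Or.inr ?_⟩
            congr 1
            rw [hprdef]
            split_ifs with h0
            · rw [Nat.sub_add_cancel (by omega), Nat.mod_self, h0]
            · rw [Nat.sub_add_cancel (by omega), Nat.mod_eq_of_lt htm]
      rw [hfilter, Finset.sum_pair (Ne.symm hprne)]
      have hpar : ((-1:ℝ))^t + ((-1:ℝ))^pr = 0 := by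
        by_cases ht0 : t = 0
        · have hpr : pr = m - 1 := by rw [hprdef, if_pos ht0]
          have hodd : Odd (m - 1) := Nat.Even.sub_odd (by omega) heven odd_one
          rw [ht0, hpr, hodd.neg_one_pow]; norm_num
        · have hpr : pr = t - 1 := by rw [hprdef, if_neg ht0]
          have htpr : t = pr + 1 := by omega
          rw [htpr, pow_succ]; ring
      rw [hpar]
    · have hfilter : (Finset.range m).filter (fun i => v ∈ q i) = ∅ := by
        rw [Finset.filter_eq_empty_iff]
        intro i hi
        have him := Finset.mem_range.mp hi
        rw [hqdef]
        simp only [Sym2.mem_iff]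
        rintro (rfl | rfl)
        · exact hv ⟨i, him, rfl⟩
        · exact hv ⟨(i+1) % m, hmod i, rfl⟩
      rw [hfilter, Finset.sum_empty]

lemma path_case (hx : IsFracBMatching G b x) (k : ℕ) (hk : 1 ≤ k) (p : ℕ → V)
    (hpath : IsFPath G x p k)
    (hcs : ∀ e ∈ G.edgeFinset, p 0 ∈ e → e ≠ s(p 0, p 1) → x e = 0 ∨ x e = 1)
    (hce : ∀ e ∈ G.edgeFinset, p k ∈ e → e ≠ s(p (k-1), p k) → x e = 0 ∨ x e = 1) :
    ∃ x' : Sym2 V → ℝ, IsFracBMatching G b x' ∧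
      ∑ e ∈ G.edgeFinset, x e ≤ ∑ e ∈ G.edgeFinset, x' e ∧
      (fracset G x').card < (fracset G x).card := by
  obtain ⟨hpinj, hpe⟩ := hpath
  set q : ℕ → Sym2 V := fun i => s(p i, p (i+1)) with hqdef
  have hinj : ∀ i < k, ∀ j < k, q i = q j → i = j := by
    intro i hi j hj heq
    rw [hqdef] at heq
    simp only [Sym2.eq_iff] at heq
    rcases heq with ⟨h1, _⟩ | ⟨h1, h2⟩
    · exact hpinj i (by omega) j (by omega) h1
    · have e1 : i = j + 1 := hpinj i (by omega) (j+1) (by omega) h1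
      have e2 : i + 1 = j := hpinj (i+1) (by omega) j (by omega) h2
      omega
  have hmemq : ∀ t ≤ k, ∀ i < k, (p t ∈ q i ↔ i = t ∨ i + 1 = t) := by
    intro t ht i hi
    rw [hqdef]
    simp only [Sym2.mem_iff]
    constructor
    · rintro (h | h)
      · left; exact (hpinj t ht i (by omega) h).symm
      · right; exact (hpinj t ht (i+1) (by omega) h).symm
    · rintro (rfl | h)
      · exact Or.inl rfl
      · right; congr 1; omega
  apply core hx k hk q hinj (fun i hi => (hpe i hi).1) (fun i hi => (hpe i hi).2)
    (fun i => (-1 : ℝ)^i)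
  · intro i _
    rcases Nat.even_or_odd i with h | h
    · left; exact h.neg_one_pow
    · right; exact h.neg_one_pow
  · rw [neg_one_geom_sum]; split_ifs <;> norm_num
  · intro v
    by_cases hv : ∃ t, t ≤ k ∧ v = p t
    · obtain ⟨t, htk, rfl⟩ := hv
      by_cases ht0 : t = 0
      · subst ht0
        right
        have hfilter : (Finset.range k).filter (fun i => p 0 ∈ q i) = {0} := by
          ext i
          simp only [Finset.mem_filter, Finset.mem_range, Finset.mem_singleton]
          constructor
          · rintro ⟨hik, hmem⟩
            have := (hmemq 0 (by omega) i hik).mp hmem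
            omega
          · rintro rfl
            exact ⟨by omega, (hmemq 0 (by omega) 0 (by omega)).mpr (Or.inl rfl)⟩
        refine ⟨0, by omega, ?_, by norm_num, ?_, ?_⟩
        · exact (hmemq 0 (by omega) 0 (by omega)).mpr (Or.inl rfl)
        · rw [hfilter, Finset.sum_singleton]; norm_num
        · intro e he hv' hne'
          apply hcs e he hv'
          rw [hqdef] at hne'
          simpa using hne'
      · by_cases htk' : t = k
        · rw [htk']
          have hfilter : (Finset.range k).filter (fun i => p k ∈ q i) = {k-1} := by
            ext i
            simp only [Finset.mem_filter, Finset.mem_range, Finset.mem_singleton]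
            constructor
            · rintro ⟨hik, hmem⟩
              have := (hmemq k le_rfl i hik).mp hmem
              omega
            · rintro rfl
              refine ⟨by omega, (hmemq k le_rfl (k-1) (by omega)).mpr (Or.inr (by omega))⟩
          rcases Nat.even_or_odd k with hek | hok
          · left
            have hodd : Odd (k - 1) := Nat.Even.sub_odd (by omega) hek odd_one
            rw [hfilter, Finset.sum_singleton, hodd.neg_one_pow]
            norm_num
          · right
            have hev : Even (k - 1) := by
              rcases hok with ⟨c, hc⟩
              exact ⟨c, by omega⟩
            have hqk : q (k-1) = s(p (k-1), p k) := by
              show s(p (k-1), p (k-1+1)) = s(p (k-1), p k)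
              have hk1 : k - 1 + 1 = k := by omega
              rw [hk1]
            refine ⟨k-1, by omega, ?_, hev.neg_one_pow, ?_, ?_⟩
            · rw [hqk]; simp [Sym2.mem_iff]
            · rw [hfilter, Finset.sum_singleton, hev.neg_one_pow]
            · intro e he hv' hne'
              apply hce e he hv'
              rw [hqk] at hne'
              exact hne'
        · left
          have hfilter : (Finset.range k).filter (fun i => p t ∈ q i) = {t, t-1} := by
            ext i
            simp only [Finset.mem_filter, Finset.mem_range, Finset.mem_insert,
              Finset.mem_singleton]
            constructor
            · rintro ⟨hik, hmem⟩
              have := (hmemq t htk i hik).mp hmem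
              omega
            · intro h
              have hik : i < k := by omega
              refine ⟨hik, ?_⟩
              rcases h with h | h
              · exact (hmemq t htk i hik).mpr (Or.inl h)
              · exact (hmemq t htk i hik).mpr (Or.inr (by omega))
          rw [hfilter, Finset.sum_pair (by omega : t ≠ t - 1)]
          have htpr : t = (t-1) + 1 := by omega
          rw [htpr, pow_succ]
          ring_nf
          simp
    · left
      have hfilter : (Finset.range k).filter (fun i => v ∈ q i) = ∅ := by
        rw [Finset.filter_eq_empty_iff]
        intro i hi
        have hik := Finset.mem_range.mp hi
        rw [hqdef]
        simp only [Sym2.mem_iff]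
        rintro (rfl | rfl)
        · exact hv ⟨i, by omega, rfl⟩
        · exact hv ⟨i+1, by omega, rfl⟩
      rw [hfilter, Finset.sum_empty]


lemma parity_lemma {A : Set V} (hA : ∀ u v, G.Adj u v → (u ∈ A ↔ v ∉ A))
    (p : ℕ → V) (k : ℕ) (hpe : ∀ i < k, G.Adj (p i) (p (i+1))) :
    ∀ i ≤ k, (p i ∈ A ↔ (p 0 ∈ A ↔ Even i)) := by
  intro i
  induction i with
  | zero => intro _; simp
  | succ n ih =>
    intro h
    have hn := ih (by omega)
    have hadj := hA _ _ (hpe n (by omega))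
    have hev : Even (n+1) ↔ ¬ Even n := Nat.even_add_one
    tauto

lemma dirty_case (hx : IsFracBMatching G b x)
    {A : Set V} (hA : ∀ u v, G.Adj u v → (u ∈ A ↔ v ∉ A))
    (k : ℕ) (hk : 1 ≤ k) (p : ℕ → V) (hpath : IsFPath G x p k)
    (hmax : ∀ p', ¬ IsFPath G x p' (k+1))
    (e : Sym2 V) (he : e ∈ G.edgeFinset) (hve : p 0 ∈ e) (hnee : e ≠ s(p 0, p 1))
    (hf0 : x e ≠ 0) (hf1 : x e ≠ 1) :
    ∃ x' : Sym2 V → ℝ, IsFracBMatching G b x' ∧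
      ∑ e ∈ G.edgeFinset, x e ≤ ∑ e ∈ G.edgeFinset, x' e ∧
      (fracset G x').card < (fracset G x).card := by
  obtain ⟨hpinj, hpe⟩ := hpath
  obtain ⟨w, rfl⟩ := Sym2.mem_iff_exists.mp hve
  have hadj : G.Adj (p 0) w := G.mem_edgeSet.mp (SimpleGraph.mem_edgeFinset.mp he)
  have hw0 : w ≠ p 0 := Ne.symm (SimpleGraph.Adj.ne hadj)
  have hw1 : w ≠ p 1 := fun h => hnee (by rw [h])
  by_cases hw : ∃ j, j ≤ k ∧ w = p j
  · obtain ⟨j, hjk, rfl⟩ := hw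
    have hj0 : j ≠ 0 := fun h => hw0 (by rw [h])
    have hj1 : j ≠ 1 := fun h => hw1 (by rw [h])
    have hj2 : 2 ≤ j := by omega
    have hadjchain : ∀ i < k, G.Adj (p i) (p (i+1)) := fun i hi =>
      G.mem_edgeSet.mp (SimpleGraph.mem_edgeFinset.mp (hpe i hi).1)
    have hpar := parity_lemma hA p k hadjchain j hjk
    have hbi := hA _ _ hadj
    have hoddj : Odd j := by
      rw [← Nat.not_even_iff_odd]
      intro hev
      rw [hpar] at hbi
      tauto
    have heven : Even (j+1) := hoddj.add_one
    apply cycle_case hx (j+1) (by omega) heven p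
    · intro i hi i' hi' hpp
      exact hpinj i (by omega) i' (by omega) hpp
    · intro i hi
      by_cases hij : i = j
      · subst hij
        have hmod : (i+1) % (i+1) = 0 := Nat.mod_self _
        rw [hmod]
        have : s(p i, p 0) = s(p 0, p i) := Sym2.eq_swap
        rw [this]
        exact ⟨he, hf0, hf1⟩
      · have hil : i + 1 < j + 1 := by omega
        rw [Nat.mod_eq_of_lt hil]
        exact hpe i (by omega)
  · exfalso
    set pp : ℕ → V := fun i => if i = 0 then w else p (i - 1) with hppdef
    have hppi : ∀ i : ℕ, pp i = if i = 0 then w else p (i - 1) := fun _ => rfl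
    apply hmax pp
    constructor
    · intro i hi i' hi' heq
      rw [hppi i, hppi i'] at heq
      by_cases h1 : i = 0 <;> by_cases h2 : i' = 0
      · omega
      · exfalso
        rw [if_pos h1, if_neg h2] at heq
        exact hw ⟨i' - 1, by omega, heq⟩
      · exfalso
        rw [if_neg h1, if_pos h2] at heq
        exact hw ⟨i - 1, by omega, heq.symm⟩
      · rw [if_neg h1, if_neg h2] at heq
        have := hpinj (i-1) (by omega) (i'-1) (by omega) heq
        omega
    · intro i hi
      by_cases h1 : i = 0
      · subst h1
        have e1 : pp 0 = w := rfl
        have e2 : pp 1 = p 0 := rfl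
        rw [e1, e2]
        have hsw : s(w, p 0) = s(p 0, w) := Sym2.eq_swap
        rw [hsw]
        exact ⟨he, hf0, hf1⟩
      · have e1 : pp i = p (i-1) := by rw [hppi i, if_neg h1]
        have e2 : pp (i+1) = p ((i-1)+1) := by
          rw [hppi (i+1), if_neg (by omega : ¬ i + 1 = 0)]
          congr 1
          omega
        rw [e1, e2]
        exact hpe (i-1) (by omega)

lemma reduce (hx : IsFracBMatching G b x)
    {A : Set V} (hA : ∀ u v, G.Adj u v → (u ∈ A ↔ v ∉ A))
    (hne : (fracset G x).Nonempty) :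
    ∃ x' : Sym2 V → ℝ, IsFracBMatching G b x' ∧
      ∑ e ∈ G.edgeFinset, x e ≤ ∑ e ∈ G.edgeFinset, x' e ∧
      (fracset G x').card < (fracset G x).card := by
  obtain ⟨e0, he0⟩ := hne
  rw [fracset, Finset.mem_filter] at he0
  obtain ⟨u, w, rfl⟩ : ∃ a c, e0 = s(a, c) :=
    Sym2.ind (f := fun e => ∃ a c, e = s(a, c)) (fun a c => ⟨a, c, rfl⟩) e0
  obtain ⟨hmem0, hf00, hf01⟩ := he0
  have hadj : G.Adj u w := G.mem_edgeSet.mp (SimpleGraph.mem_edgeFinset.mp hmem0)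
  have huw : u ≠ w := hadj.ne
  set p0 : ℕ → V := fun i => if i = 0 then u else w with hp0
  have hP1 : IsFPath G x p0 1 := by
    constructor
    · intro i hi j hj heq
      have h0 : p0 0 = u := rfl
      have h1 : p0 1 = w := rfl
      interval_cases i <;> interval_cases j <;> simp_all
    · intro i hi
      have hi0 : i = 0 := by omega
      subst hi0
      have e1 : p0 0 = u := if_pos rfl
      have e2 : p0 1 = w := if_neg one_ne_zero
      rw [e1, e2]
      exact ⟨hmem0, hf00, hf01⟩
  have hcard : ∀ k (p : ℕ → V), IsFPath G x p k → k + 1 ≤ Fintype.card V := by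
    intro k p hp
    have hinj : Function.Injective (fun i : Fin (k+1) => p i) := by
      intro i j hij
      have := hp.1 i (by omega) j (by omega) hij
      exact Fin.ext this
    have := Fintype.card_le_of_injective _ hinj
    simpa using this
  have hV1 : 1 ≤ Fintype.card V := by have := hcard 1 p0 hP1; omega
  set P : ℕ → Prop := fun k => ∃ p, IsFPath G x p k with hPdef
  have hP1' : P 1 := ⟨p0, hP1⟩
  set k := Nat.findGreatest P (Fintype.card V) with hkdef
  have hk1 : 1 ≤ k := Nat.le_findGreatest hV1 hP1'
  have hPk : P k := Nat.findGreatest_spec hV1 hP1'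
  have hmax : ∀ p', ¬ IsFPath G x p' (k+1) := by
    intro p' hp'
    have hb := hcard (k+1) p' hp'
    exact Nat.findGreatest_is_greatest (lt_add_one k) (by omega) ⟨p', hp'⟩
  obtain ⟨p, hpath⟩ := hPk
  by_cases hcs : ∀ e ∈ G.edgeFinset, p 0 ∈ e → e ≠ s(p 0, p 1) → x e = 0 ∨ x e = 1
  · by_cases hce : ∀ e ∈ G.edgeFinset, p k ∈ e → e ≠ s(p (k-1), p k) → x e = 0 ∨ x e = 1
    · exact path_case hx k hk1 p hpath hcs hce
    · push_neg at hce
      obtain ⟨e, hmem, hv, hnee, hf⟩ := hce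
      set pr : ℕ → V := fun i => p (k - i) with hprdef
      have hrev : IsFPath G x pr k := by
        constructor
        · intro i hi j hj heq
          have := hpath.1 (k-i) (by omega) (k-j) (by omega) heq
          omega
        · intro i hi
          have e1 : pr i = p ((k - (i+1)) + 1) := by
            show p (k - i) = _
            congr 1
            omega
          have e2 : pr (i+1) = p (k - (i+1)) := rfl
          rw [e1, e2]
          have : s(p ((k-(i+1))+1), p (k-(i+1))) = s(p (k-(i+1)), p ((k-(i+1))+1)) :=
            Sym2.eq_swap
          rw [this]
          exact hpath.2 (k-(i+1)) (by omega)
      have hpr0 : pr 0 = p k := by show p (k - 0) = p k; congr 1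
      have hpr1 : pr 1 = p (k-1) := rfl
      apply dirty_case hx hA k hk1 pr hrev hmax e hmem
      · rw [hpr0]; exact hv
      · rw [hpr0, hpr1]
        intro h
        apply hnee
        rw [h]
        exact Sym2.eq_swap
      · exact hf.1
      · exact hf.2
  · push_neg at hcs
    obtain ⟨e, hmem, hv, hnee, hf⟩ := hcs
    exact dirty_case hx hA k hk1 p hpath hmax e hmem hv hnee hf.1 hf.2


lemma upper (s : ℕ)
    (hs_max : ∀ M : Finset (Sym2 V), IsBMatching G b M → M.card ≤ s)
    {A : Set V} (hA : ∀ u v, G.Adj u v → (u ∈ A ↔ v ∉ A))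
    (hx : IsFracBMatching G b x) :
    ∑ e ∈ G.edgeFinset, x e ≤ (s : ℝ) := by
  generalize hn : (fracset G x).card = n
  induction n using Nat.strong_induction_on generalizing x with
  | _ n ih =>
    by_cases hne : (fracset G x).Nonempty
    · obtain ⟨x', hx', hval, hlt⟩ := reduce hx hA hne
      calc ∑ e ∈ G.edgeFinset, x e ≤ ∑ e ∈ G.edgeFinset, x' e := hval
        _ ≤ (s : ℝ) := ih (fracset G x').card (by omega) hx' rfl
    · have hint : ∀ e ∈ G.edgeFinset, x e = 0 ∨ x e = 1 := by
        intro e he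
        by_contra h
        push_neg at h
        exact hne ⟨e, by rw [fracset, Finset.mem_filter]; exact ⟨he, h⟩⟩
      set M := G.edgeFinset.filter (fun e => x e = 1) with hM
      have hMsub : M ⊆ G.edgeFinset := Finset.filter_subset _ _
      have hMb : IsBMatching G b M := by
        constructor
        · intro e he
          rw [Finset.mem_coe] at he
          exact SimpleGraph.mem_edgeFinset.mp (hMsub he)
        · intro v
          have h1 : M.filter (fun e => v ∈ e)
              = (G.edgeFinset.filter (fun e => v ∈ e)).filter (fun e => x e = 1) := by
            rw [hM]
            exact Finset.filter_comm _ _ _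
          have h2 : ((M.filter (fun e => v ∈ e)).card : ℝ)
              = ∑ e ∈ (G.edgeFinset.filter (fun e => v ∈ e)).filter (fun e => x e = 1), x e := by
            rw [h1]
            rw [Finset.sum_congr rfl (fun e he => (Finset.mem_filter.mp he).2)]
            simp
          have h3 : ∑ e ∈ (G.edgeFinset.filter (fun e => v ∈ e)).filter (fun e => x e = 1), x e
              ≤ ∑ e ∈ G.edgeFinset.filter (fun e => v ∈ e), x e := by
            apply Finset.sum_le_sum_of_subset_of_nonneg (Finset.filter_subset _ _)
            intro e _ _
            exact (hx.1 e).1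
          have h4 := hx.2.2 v
          have : ((M.filter (fun e => v ∈ e)).card : ℝ) ≤ (b v : ℝ) := by
            rw [h2]; linarith
          exact_mod_cast this
      have hsum : ∑ e ∈ G.edgeFinset, x e = (M.card : ℝ) := by
        rw [← Finset.sum_filter_add_sum_filter_not G.edgeFinset (fun e => x e = 1) x]
        have h1 : ∑ e ∈ G.edgeFinset.filter (fun e => x e = 1), x e = (M.card : ℝ) := by
          rw [hM, Finset.sum_congr rfl (fun e he => (Finset.mem_filter.mp he).2)]
          simp
        have h2 : ∑ e ∈ G.edgeFinset.filter (fun e => ¬ x e = 1), x e = 0 := by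
          apply Finset.sum_eq_zero
          intro e he
          rcases Finset.mem_filter.mp he with ⟨hee, hne1⟩
          rcases hint e hee with h | h
          · exact h
          · exact absurd h hne1
        rw [h1, h2, add_zero]
      rw [hsum]
      exact_mod_cast hs_max M hMb

end BMatchAux

/-- On a bipartite graph, the maximum value of a fractional `b`-matching equals the
maximum size of an integral `b`-matching: the integrality gap is `1`. -/
theorem bipartite_bMatching_integrality_gap_one [Fintype V]
    (G : SimpleGraph V) (b : V → ℕ)
    (hbip : ∃ A : Set V, ∀ u v : V, G.Adj u v → (u ∈ A ↔ v ∉ A))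
    -- `s` is the maximum size of an integral `b`-matching
    (s : ℕ)
    (hs_max : ∀ M : Finset (Sym2 V), IsBMatching G b M → M.card ≤ s)
    (hs_ach : ∃ M : Finset (Sym2 V), IsBMatching G b M ∧ M.card = s) :
    IsGreatest {c : ℝ | ∃ x : Sym2 V → ℝ, IsFracBMatching G b x ∧
      c = ∑ e ∈ G.edgeFinset, x e} (s : ℝ) := by
  constructor
  · obtain ⟨M, hM, hcard⟩ := hs_ach
    have hMsub : M ⊆ G.edgeFinset := by
      intro e he
      exact SimpleGraph.mem_edgeFinset.mpr (hM.1 (Finset.mem_coe.mpr he))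
    set y : Sym2 V → ℝ := fun e => if e ∈ M then 1 else 0 with hy
    have hyi : ∀ e, y e = if e ∈ M then 1 else 0 := fun _ => rfl
    have hcardsum : ∀ S : Finset (Sym2 V),
        ∑ e ∈ S, y e = ((S.filter (fun e => e ∈ M)).card : ℝ) := by
      intro S
      rw [Finset.sum_congr rfl (fun e _ => hyi e), Finset.sum_boole]
    refine ⟨y, ⟨?_, ?_, ?_⟩, ?_⟩
    · intro e; rw [hyi e]; split_ifs <;> norm_num
    · intro e he
      rw [hyi e, if_neg (fun heM => he (hM.1 (Finset.mem_coe.mpr heM)))]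
    · intro v
      rw [hcardsum]
      have hset : (G.edgeFinset.filter (fun e => v ∈ e)).filter (fun e => e ∈ M)
          = M.filter (fun e => v ∈ e) := by
        ext e
        simp only [Finset.mem_filter]
        constructor
        · rintro ⟨⟨_, hv⟩, hm⟩; exact ⟨hm, hv⟩
        · rintro ⟨hm, hv⟩; exact ⟨⟨hMsub hm, hv⟩, hm⟩
      rw [hset]
      exact_mod_cast hM.2 v
    · rw [hcardsum]
      have hset : G.edgeFinset.filter (fun e => e ∈ M) = M := by
        ext e
        simp only [Finset.mem_filter]
        constructor
        · rintro ⟨_, hm⟩; exact hm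
        · intro hm; exact ⟨hMsub hm, hm⟩
      rw [hset, hcard]
  · rintro c ⟨x, hx, rfl⟩
    obtain ⟨A, hA⟩ := hbip
    exact BMatchAux.upper s hs_max hA hx
end

section
/- Let x be a half-integral optimal fractional b-matching of a finite graph G (all x_e ∈ {0, 1/2, 1}), and let H be the subgraph of edges with x_e = 1/2. If T = (e_1, …, e_t) is a trail in H between two distinct endpoints, then the vector x⁺ obtained by alternately adding and subtracting 1/2 along T (x⁺_{e_i} = x_{e_i} + (−1)^{i+1}/2, x⁺_e = x_e otherwise) is a feasible fractional b-matching with Σ_e x⁺_e ≥ Σ_e x_e, provided that at each trail endpoint v, Σ_{e ∋ v} x_e ≤ b_v − 1/2. -/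
open Finset
open scoped Classical

variable {V : Type*}

/-- Signed vertex-incidence sum along a trail: at each vertex the alternating ±ε
contributions cancel except at the endpoints. -/
lemma sign_sum_vertex [DecidableEq V] {G : SimpleGraph V} :
    ∀ {a c : V} (p : G.Walk a c), p.edges.Nodup → ∀ (ε : ℝ) (w : V),
    ((p.edges.map (fun e => if w ∈ e then ε * (-1 : ℝ) ^ (p.edges.idxOf e) else 0)).sum
      = ε * ((if w = a then 1 else 0) - (-1) ^ p.length * (if w = c then 1 else 0))) := by
  intro a c p
  induction p with
  | nil =>
      intro _ ε w
      simp only [SimpleGraph.Walk.edges_nil, List.map_nil, List.sum_nil,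
        SimpleGraph.Walk.length_nil, pow_zero]
      ring
  | @cons a b c h q ih =>
      intro hnd ε w
      simp only [SimpleGraph.Walk.edges_cons, List.map_cons, List.sum_cons,
        List.idxOf_cons_self, pow_zero, mul_one] at *
      have hnd' : q.edges.Nodup := hnd.of_cons
      have hhead : s(a, b) ∉ q.edges := (List.nodup_cons.mp hnd).1
      have htail :
          (q.edges.map (fun e =>
              if w ∈ e then ε * (-1 : ℝ) ^ ((s(a, b) :: q.edges).idxOf e) else 0)).sum
            = (q.edges.map (fun e =>
              if w ∈ e then (-ε) * (-1 : ℝ) ^ (q.edges.idxOf e) else 0)).sum := by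
        apply congrArg List.sum
        apply List.map_congr_left
        intro e he
        have hne : s(a, b) ≠ e := fun hEq => hhead (hEq ▸ he)
        rw [List.idxOf_cons_ne _ hne]
        have : (-1 : ℝ) ^ (Nat.succ (q.edges.idxOf e)) = -(-1 : ℝ) ^ (q.edges.idxOf e) := by
          rw [pow_succ]; ring
        rw [this]
        split <;> ring
      rw [htail, ih hnd' (-ε) w]
      simp only [SimpleGraph.Walk.length_cons, Sym2.mem_iff, pow_succ]
      have hab : a ≠ b := h.ne
      by_cases hwa : w = a <;> by_cases hwb : w = b
      · exact absurd (hwa.symm.trans hwb) hab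
      · subst hwa
        simp only [eq_self_iff_true, if_true, true_or, if_neg hab]
        ring
      · subst hwb
        simp only [eq_self_iff_true, if_true, or_true, if_neg hwa]
        ring
      · have hor : ¬(w = a ∨ w = b) := by tauto
        simp only [if_neg hwa, if_neg hwb, if_neg hor]
        ring

/-- Total signed sum along a trail. -/
lemma sign_sum_total [DecidableEq V] {G : SimpleGraph V} :
    ∀ {a c : V} (p : G.Walk a c), p.edges.Nodup → ∀ (ε : ℝ),
    ((p.edges.map (fun e => ε * (-1 : ℝ) ^ (p.edges.idxOf e))).sum
      = ε * (1 - (-1) ^ p.length) / 2) := by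
  intro a c p
  induction p with
  | nil =>
      intro _ ε
      simp
  | @cons a b c h q ih =>
      intro hnd ε
      simp only [SimpleGraph.Walk.edges_cons, List.map_cons, List.sum_cons,
        List.idxOf_cons_self, pow_zero, mul_one]
      have hnd' : q.edges.Nodup := hnd.of_cons
      have hhead : s(a, b) ∉ q.edges := (List.nodup_cons.mp hnd).1
      have htail :
          (q.edges.map (fun e => ε * (-1 : ℝ) ^ ((s(a, b) :: q.edges).idxOf e))).sum
            = (q.edges.map (fun e => (-ε) * (-1 : ℝ) ^ (q.edges.idxOf e))).sum := by
        apply congrArg List.sum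
        apply List.map_congr_left
        intro e he
        have hne : s(a, b) ≠ e := fun hEq => hhead (hEq ▸ he)
        rw [List.idxOf_cons_ne _ hne, pow_succ]
        ring
      rw [htail, ih hnd' (-ε)]
      simp only [SimpleGraph.Walk.length_cons, pow_succ]
      ring

/-- Alternately rounding a half-integral fractional `b`-matching along an open trail of
half-valued edges, starting by rounding up: if both endpoints have slack `1/2`, the
resulting vector is a feasible fractional `b`-matching of no smaller total value. -/
theorem trail_rounding [Fintype V] [DecidableEq V]
    (G : SimpleGraph V) (b : V → ℕ)
    (x : Sym2 V → ℝ) (hx : IsFracBMatching G b x)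
    -- `x` is half-integral and optimal
    (hhalf : ∀ e, x e = 0 ∨ x e = 1 / 2 ∨ x e = 1)
    (hopt : ∀ y : Sym2 V → ℝ, IsFracBMatching G b y →
      ∑ e ∈ G.edgeFinset, y e ≤ ∑ e ∈ G.edgeFinset, x e)
    -- `T` is a trail between distinct endpoints, all of whose edges have value `1/2`
    {u v : V} (T : G.Walk u v) (hT : T.IsTrail) (huv : u ≠ v)
    (hhalfT : ∀ e ∈ T.edges, x e = 1 / 2)
    -- slack `1/2` at both endpoints
    (hsu : ∑ e ∈ G.edgeFinset.filter (fun e => u ∈ e), x e ≤ (b u : ℝ) - 1 / 2)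
    (hsv : ∑ e ∈ G.edgeFinset.filter (fun e => v ∈ e), x e ≤ (b v : ℝ) - 1 / 2)
    -- `x'` alternately adds and subtracts `1/2` along the trail, starting with `+`
    (x' : Sym2 V → ℝ)
    (hx'T : ∀ e ∈ T.edges,
      x' e = x e + (if Even (T.edges.idxOf e) then 1 / 2 else -(1 / 2)))
    (hx'off : ∀ e ∉ T.edges, x' e = x e) :
    IsFracBMatching G b x' ∧
      ∑ e ∈ G.edgeFinset, x e ≤ ∑ e ∈ G.edgeFinset, x' e := by
  have hnd : T.edges.Nodup := hT.edges_nodup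
  -- the difference vector
  have hδ : ∀ e, x' e - x e
      = if e ∈ T.edges then (1 / 2 : ℝ) * (-1) ^ (T.edges.idxOf e) else 0 := by
    intro e
    by_cases he : e ∈ T.edges
    · rw [if_pos he, hx'T e he]
      rcases Nat.even_or_odd (T.edges.idxOf e) with h | h
      · rw [if_pos h, h.neg_one_pow]; ring
      · rw [if_neg (Nat.not_even_iff_odd.mpr h), h.neg_one_pow]; ring
    · rw [if_neg he, hx'off e he]; ring
  have hsubE : ∀ e ∈ T.edges, e ∈ G.edgeFinset := by
    intro e he
    exact SimpleGraph.mem_edgeFinset.mpr (T.edges_subset_edgeSet he)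
  have hsub : T.edges.toFinset ⊆ G.edgeFinset := by
    intro e he
    exact hsubE e (List.mem_toFinset.mp he)
  -- general sum-difference computation over any finset containing all trail edges
  have hdiff : ∀ (s : Finset (Sym2 V)), T.edges.toFinset ⊆ s →
      ∀ f : Sym2 V → ℝ,
      (∑ e ∈ s, (if e ∈ T.edges then f e else 0))
        = (T.edges.map f).sum := by
    intro s hs f
    rw [← Finset.sum_subset hs (fun e _ he => by
      rw [if_neg (fun h => he (List.mem_toFinset.mpr h))])]
    rw [← List.sum_toFinset _ hnd]
    apply Finset.sum_congr rfl
    intro e he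
    rw [if_pos (List.mem_toFinset.mp he)]
  -- per-vertex change
  have hvert : ∀ w : V,
      ∑ e ∈ G.edgeFinset.filter (fun e => w ∈ e), x' e
        = ∑ e ∈ G.edgeFinset.filter (fun e => w ∈ e), x e
          + (1 / 2 : ℝ) * ((if w = u then 1 else 0)
              - (-1) ^ T.length * (if w = v then 1 else 0)) := by
    intro w
    have h1 : ∑ e ∈ G.edgeFinset.filter (fun e => w ∈ e), (x' e - x e)
        = ∑ e ∈ G.edgeFinset, (if e ∈ T.edges then
            (if w ∈ e then (1 / 2 : ℝ) * (-1) ^ (T.edges.idxOf e) else 0) else 0) := by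
      rw [Finset.sum_filter]
      apply Finset.sum_congr rfl
      intro e _
      rw [hδ e]
      by_cases hw : w ∈ e <;> by_cases he : e ∈ T.edges <;> simp [hw, he]
    rw [Finset.sum_sub_distrib] at h1
    have h2 := hdiff G.edgeFinset hsub
      (fun e => if w ∈ e then (1 / 2 : ℝ) * (-1) ^ (T.edges.idxOf e) else 0)
    rw [h2] at h1
    rw [sign_sum_vertex T hnd (1 / 2) w] at h1
    linarith [h1]
  refine ⟨⟨?_, ?_, ?_⟩, ?_⟩
  · -- 0 ≤ x' ≤ 1
    intro e
    by_cases he : e ∈ T.edges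
    · rw [hx'T e he, hhalfT e he]
      split <;> constructor <;> norm_num
    · rw [hx'off e he]; exact hx.1 e
  · -- zero outside edge set
    intro e he
    have : e ∉ T.edges := fun h => he (T.edges_subset_edgeSet h)
    rw [hx'off e this]
    exact hx.2.1 e he
  · -- degree constraints
    intro w
    have hxdeg : ∑ e ∈ G.edgeFinset.filter (fun e => w ∈ e), x e ≤ (b w : ℝ) := by
      have h := hx.2.2 w
      convert h using 2
      ext e
      simp [SimpleGraph.mem_edgeFinset]
    have hineq : ∑ e ∈ G.edgeFinset.filter (fun e => w ∈ e), x' e ≤ (b w : ℝ) := by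
      rw [hvert w]
      by_cases hwu : w = u
      · subst hwu
        rw [if_pos rfl, if_neg huv]
        nlinarith [hsu]
      · by_cases hwv : w = v
        · subst hwv
          rw [if_neg hwu, if_pos rfl]
          have hpow : ((-1 : ℝ) ^ T.length = 1) ∨ ((-1 : ℝ) ^ T.length = -1) := by
            rcases Nat.even_or_odd T.length with h | h
            · left; exact h.neg_one_pow
            · right; exact h.neg_one_pow
          rcases hpow with h | h <;> rw [h] <;> nlinarith [hsv]
        · rw [if_neg hwu, if_neg hwv]
          nlinarith [hxdeg]
    convert hineq using 2
    ext e
    simp [SimpleGraph.mem_edgeFinset]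
  · -- total value does not decrease
    have h1 : ∑ e ∈ G.edgeFinset, (x' e - x e)
        = ∑ e ∈ G.edgeFinset, (if e ∈ T.edges then
            (1 / 2 : ℝ) * (-1) ^ (T.edges.idxOf e) else 0) := by
      apply Finset.sum_congr rfl
      intro e _
      exact hδ e
    rw [Finset.sum_sub_distrib] at h1
    rw [hdiff G.edgeFinset hsub (fun e => (1 / 2 : ℝ) * (-1) ^ (T.edges.idxOf e))] at h1
    rw [sign_sum_total T hnd (1 / 2)] at h1
    have hpow : ((-1 : ℝ) ^ T.length = 1) ∨ ((-1 : ℝ) ^ T.length = -1) := by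
      rcases Nat.even_or_odd T.length with h | h
      · left; exact h.neg_one_pow
      · right; exact h.neg_one_pow
    rcases hpow with h | h <;> rw [h] at h1 <;> nlinarith [h1]
end
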